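/- arXiv:1502.06396 — 7 statements merged into one kernel-verified Lean document; each statement's English description precedes it below -/
import Mathlib

section
/- Let k ≥ 2 be an integer and let W be a bounded bilateral weighted shift on ℓ²(ℤ, ℂ) with nonzero weights (λ_n)_{n∈ℤ} (so W is injective). If (W*W)^k = (W*)^k W^k, then W is quasinormal, i.e., W ∘ (W*W) = (W*W) ∘ W. -/
open Finset

/-- If a real sequence on `ℤ` is bounded above and each term is the average of the
next `J+1` terms, then it is constant. -/
lemma seq_const_of_avg (J : ℕ) (t : ℤ → ℝ) (M₀ : ℝ) (hb : ∀ n, t n ≤ M₀)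
    (hrel : ∀ n : ℤ, ((J : ℝ) + 1) * t n = ∑ i ∈ Finset.range (J + 1), t (n + 1 + i)) :
    ∀ n : ℤ, t (n + 1) = t n := by
  have hbdd : BddAbove (Set.range t) := ⟨M₀, by rintro _ ⟨n, rfl⟩; exact hb n⟩
  set M : ℝ := ⨆ n, t n with hMdef
  have hM : ∀ n, t n ≤ M := fun n => le_ciSup hbdd n
  -- spreading lemma
  have spread : ∀ (s : ℤ → ℝ),
      (∀ n : ℤ, ((J : ℝ) + 1) * s n = ∑ i ∈ Finset.range (J + 1), s (n + 1 + i)) →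
      ∀ n : ℤ, ∃ i : ℕ, i ≤ J ∧ s n ≤ s (n + 1 + i) := by
    intro s hs n
    by_contra h
    push_neg at h
    have h1 : ∑ i ∈ Finset.range (J + 1), s (n + 1 + i)
        < ∑ _i ∈ Finset.range (J + 1), s n := by
      refine Finset.sum_lt_sum_of_nonempty (Finset.nonempty_range_iff.2 (Nat.succ_ne_zero J)) ?_
      intro i hi
      exact h i (Nat.lt_succ_iff.mp (Finset.mem_range.mp hi))
    rw [Finset.sum_const, Finset.card_range, nsmul_eq_mul] at h1
    rw [← hs n] at h1
    push_cast at h1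
    linarith
  -- far away terms at least as big exist
  have hB : ∀ (n : ℤ) (j : ℕ), ∃ m : ℤ, n + j ≤ m ∧ t n ≤ t m := by
    intro n j
    induction j with
    | zero => exact ⟨n, by simp, le_refl _⟩
    | succ j ih =>
      obtain ⟨m, hm1, hm2⟩ := ih
      obtain ⟨i, _, hi2⟩ := spread t hrel m
      exact ⟨m + 1 + i, by push_cast at hm1 ⊢; omega, hm2.trans hi2⟩
  -- near-maximum points propagate forward with controlled loss
  have hC : ∀ (n : ℤ) (j : ℕ), M - ((J : ℝ) + 1) ^ j * (M - t n) ≤ t (n + j) := by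
    intro n j
    induction j with
    | zero => simp
    | succ j ih =>
      have hu := hrel (n + j)
      have hsplit : ∑ i ∈ Finset.range (J + 1), t (n + j + 1 + i)
          = (∑ i ∈ Finset.range J, t (n + j + 1 + (i + 1))) + t (n + j + 1) := by
        rw [Finset.sum_range_succ']
        norm_num
      have hbound : ∑ i ∈ Finset.range J, t (n + j + 1 + (i + 1)) ≤ (J : ℝ) * M := by
        calc ∑ i ∈ Finset.range J, t (n + j + 1 + (i + 1))
            ≤ ∑ _i ∈ Finset.range J, M := Finset.sum_le_sum fun i _ => hM _
          _ = (J : ℝ) * M := by rw [Finset.sum_const, Finset.card_range, nsmul_eq_mul]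
      have key : ((J : ℝ) + 1) * (M - ((J : ℝ) + 1) ^ j * (M - t n))
          ≤ ((J : ℝ) + 1) * t (n + j) :=
        mul_le_mul_of_nonneg_left ih (by positivity)
      have hidx : (n + (↑(j + 1)) : ℤ) = n + ↑j + 1 := by push_cast; ring
      rw [hidx, pow_succ]
      rw [hu, hsplit] at key
      linarith
  -- the difference sequence satisfies the same averaging relation
  set d : ℤ → ℝ := fun n => t (n + 1) - t n with hd
  have hdrel : ∀ n : ℤ, ((J : ℝ) + 1) * d n = ∑ i ∈ Finset.range (J + 1), d (n + 1 + i) := by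
    intro n
    have h1 := hrel n
    have h2 := hrel (n + 1)
    have e1 : ∑ i ∈ Finset.range (J + 1), d (n + 1 + i)
        = ∑ i ∈ Finset.range (J + 1), t (n + 1 + 1 + i)
          - ∑ i ∈ Finset.range (J + 1), t (n + 1 + i) := by
      rw [← Finset.sum_sub_distrib]
      refine Finset.sum_congr rfl fun i _ => ?_
      simp only [hd]
      congr 2
      ring
    rw [e1, ← h1, ← h2]
    simp only [hd]
    ring
  -- no strict increase anywhere
  have hmono : ∀ n : ℤ, d n ≤ 0 := by
    intro n₁
    by_contra hpos
    push_neg at hpos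
    obtain ⟨c, hc⟩ : ∃ x : ℝ, x = d n₁ := ⟨_, rfl⟩
    rw [← hc] at hpos
    obtain ⟨P, hP⟩ : ∃ x : ℝ, x = ((J : ℝ) + 1) ^ J := ⟨_, rfl⟩
    have hJ1 : (1 : ℝ) ≤ (J : ℝ) + 1 := by
      have := Nat.cast_nonneg (α := ℝ) J
      linarith
    have hP1 : (1 : ℝ) ≤ P := hP ▸ one_le_pow₀ hJ1
    have hP0 : (0 : ℝ) < P := by linarith
    obtain ⟨ε, hε⟩ : ∃ x : ℝ, x = c / (2 * P) := ⟨_, rfl⟩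
    have hε0 : 0 < ε := by rw [hε]; positivity
    -- a chain of indices with difference at least c
    have hD : ∀ j : ℕ, ∃ m' : ℤ, n₁ + j ≤ m' ∧ m' ≤ n₁ + j + J ∧ c ≤ d m' := by
      intro j
      induction j with
      | zero => exact ⟨n₁, by push_cast; omega, by push_cast; omega, le_of_eq hc⟩
      | succ j ih =>
        obtain ⟨m', h1, h2, h3⟩ := ih
        by_cases hcase : n₁ + (j + 1 : ℕ) ≤ m'
        · exact ⟨m', hcase, by push_cast at h2 ⊢; omega, h3⟩
        · have hm' : m' = n₁ + j := by push_cast at h1 hcase ⊢; omega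
          obtain ⟨i, hi, hi2⟩ := spread d hdrel m'
          exact ⟨m' + 1 + i, by push_cast; omega,
            by rw [hm']; push_cast; omega, h3.trans hi2⟩
    -- a near-maximum point beyond n₁
    obtain ⟨n₂, hn₂⟩ := exists_lt_of_lt_ciSup (show M - ε < M by linarith)
    obtain ⟨m, hm1, hm2⟩ := hB n₂ ((n₁ - n₂).toNat)
    have hmn₁ : n₁ ≤ m := by
      have := Int.self_le_toNat (n₁ - n₂)
      omega
    have htm : M - ε < t m := lt_of_lt_of_le hn₂ hm2
    -- a chain point in the window [m, m + J]
    obtain ⟨m', h1, h2, h3⟩ := hD ((m - n₁).toNat)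
    rw [Int.toNat_of_nonneg (by omega)] at h1 h2
    have h1' : m ≤ m' := by omega
    have h2' : m' ≤ m + J := by omega
    -- near-maximality at m'
    have hCm := hC m ((m' - m).toNat)
    rw [Int.toNat_of_nonneg (by omega)] at hCm
    have hexp : ((J : ℝ) + 1) ^ ((m' - m).toNat) ≤ P := by
      rw [hP]
      exact pow_le_pow_right₀ hJ1 (by omega)
    have hMt0 : 0 ≤ M - t m := by linarith [hM m]
    have hMtε : M - t m ≤ ε := by linarith
    have hmul : ((J : ℝ) + 1) ^ ((m' - m).toNat) * (M - t m) ≤ P * ε :=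
      mul_le_mul hexp hMtε hMt0 (by linarith)
    have hPε : P * ε = c / 2 := by
      rw [hε]
      field_simp
    have hm'add : m + (m' - m) = m' := by ring
    rw [hm'add] at hCm
    have hdm' : d m' ≤ c / 2 := by
      have := hM (m' + 1)
      simp only [hd]
      linarith
    have hfin : c ≤ c / 2 := h3.trans hdm'
    linarith
  -- conclude
  have hdec : ∀ (n : ℤ) (i : ℕ), t (n + 1 + i) ≤ t (n + 1) := by
    intro n i
    induction i with
    | zero => simp
    | succ i ih =>
      have h0 := hmono (n + 1 + i)
      simp only [hd] at h0
      have hidx : (n + 1 + (↑(i + 1)) : ℤ) = n + 1 + ↑i + 1 := by push_cast; ring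
      rw [hidx]
      linarith
  intro n
  have h1 := hrel n
  have hle : ∑ i ∈ Finset.range (J + 1), t (n + 1 + i)
      ≤ ((J : ℝ) + 1) * t (n + 1) := by
    calc ∑ i ∈ Finset.range (J + 1), t (n + 1 + i)
        ≤ ∑ _i ∈ Finset.range (J + 1), t (n + 1) := Finset.sum_le_sum fun i _ => hdec n i
      _ = ((J : ℝ) + 1) * t (n + 1) := by
          rw [Finset.sum_const, Finset.card_range, nsmul_eq_mul]; push_cast; ring
  have hJ0 : (0 : ℝ) < (J : ℝ) + 1 := by positivity
  have h2 : t n ≤ t (n + 1) := le_of_mul_le_mul_left (by linarith) hJ0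
  have h3 := hmono n
  simp only [hd] at h3
  linarith

open ContinuousLinearMap


set_option maxHeartbeats 1000000 in
/-- A bounded injective bilateral weighted shift `W` on `ℓ²(ℤ, ℂ)` satisfying
`(W*W)^k = (W*)^k W^k` for some `k ≥ 2` is quasinormal. -/
theorem bilateral_shift_quasinormal (k : ℕ) (hk : 2 ≤ k)
    (W : lp (fun _ : ℤ => ℂ) 2 →L[ℂ] lp (fun _ : ℤ => ℂ) 2)
    (l : ℤ → ℂ) (hl : ∀ n : ℤ, l n ≠ 0)
    (hW : ∀ n : ℤ, W (lp.single 2 n 1) = l n • lp.single 2 (n + 1) 1)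
    (heq : (adjoint W * W) ^ k = (adjoint W) ^ k * W ^ k) :
    W * (adjoint W * W) = (adjoint W * W) * W := by
  classical
  -- coordinates via inner products
  have coord : ∀ (x : lp (fun _ : ℤ => ℂ) 2) (m : ℤ),
      (inner ℂ (lp.single 2 m (1 : ℂ)) x : ℂ) = x m := by
    intro x m
    rw [lp.inner_single_left]
    simp [RCLike.inner_apply]
  have Ws_coord : ∀ (x : lp (fun _ : ℤ => ℂ) 2) (m : ℤ),
      (adjoint W x) m = (starRingEnd ℂ) (l m) * x (m + 1) := by
    intro x m
    rw [← coord (adjoint W x) m, adjoint_inner_right, hW m, inner_smul_left, coord]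
  have Ws_single : ∀ m : ℤ,
      adjoint W (lp.single 2 (m + 1) 1) = (starRingEnd ℂ) (l m) • lp.single 2 m 1 := by
    intro m
    apply lp.ext
    funext j
    rw [Ws_coord, lp.coeFn_smul, Pi.smul_apply]
    by_cases hj : j = m
    · subst hj
      simp [lp.single_apply_self]
    · have h2 : j + 1 ≠ m + 1 := by omega
      rw [lp.single_apply_ne _ _ _ h2, lp.single_apply_ne _ _ _ hj]
      simp
  have W_coord : ∀ (x : lp (fun _ : ℤ => ℂ) 2) (m : ℤ),
      (W x) m = l (m - 1) * x (m - 1) := by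
    intro x m
    have h := Ws_single (m - 1)
    rw [show m - 1 + 1 = m from by ring] at h
    rw [← coord (W x) m, ← adjoint_inner_left, h, inner_smul_left, coord]
    simp
  have C_coord : ∀ (x : lp (fun _ : ℤ => ℂ) 2) (m : ℤ),
      (adjoint W (W x)) m = (starRingEnd ℂ) (l m) * l m * x m := by
    intro x m
    rw [Ws_coord, W_coord, show m + 1 - 1 = m from by ring]
    ring
  -- action of powers on basis vectors
  have hWpow : ∀ (j : ℕ) (n : ℤ),
      (W ^ j) (lp.single 2 n 1) = (∏ i ∈ Finset.range j, l (n + i)) • lp.single 2 (n + j) 1 := by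
    intro j
    induction j with
    | zero => intro n; simp
    | succ j ih =>
      intro n
      rw [pow_succ, mul_apply_eq_comp, hW n, map_smul, ih (n + 1), smul_smul]
      have hsc : l n * ∏ i ∈ Finset.range j, l (n + 1 + i)
          = ∏ i ∈ Finset.range (j + 1), l (n + i) := by
        rw [Finset.prod_range_succ', mul_comm]
        congr 1
        · refine Finset.prod_congr rfl fun i _ => ?_
          congr 1
          push_cast
          ring
        · simp
      rw [hsc, show n + 1 + (j : ℤ) = n + ((j : ℕ) + 1 : ℕ) from by push_cast; ring]
  have hWspow : ∀ (j : ℕ) (n : ℤ),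
      ((adjoint W) ^ j) (lp.single 2 (n + j) 1)
        = (∏ i ∈ Finset.range j, (starRingEnd ℂ) (l (n + i))) • lp.single 2 n 1 := by
    intro j
    induction j with
    | zero => intro n; simp
    | succ j ih =>
      intro n
      rw [pow_succ', mul_apply_eq_comp,
        show n + ((j : ℕ) + 1 : ℕ) = (n + 1) + (j : ℤ) from by push_cast; ring,
        ih (n + 1), map_smul, Ws_single n, smul_smul]
      have hsc : (∏ i ∈ Finset.range j, (starRingEnd ℂ) (l (n + 1 + i))) * (starRingEnd ℂ) (l n)
          = ∏ i ∈ Finset.range (j + 1), (starRingEnd ℂ) (l (n + i)) := by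
        rw [Finset.prod_range_succ']
        congr 1
        · refine Finset.prod_congr rfl fun i _ => ?_
          congr 2
          push_cast
          ring
        · simp
      rw [hsc]
  have hCpow : ∀ (j : ℕ) (n : ℤ),
      ((adjoint W * W) ^ j) (lp.single 2 n 1)
        = ((starRingEnd ℂ) (l n) * l n) ^ j • lp.single 2 n 1 := by
    intro j
    induction j with
    | zero => intro n; simp
    | succ j ih =>
      intro n
      have hC1 : (adjoint W * W) (lp.single 2 n 1)
          = ((starRingEnd ℂ) (l n) * l n) • lp.single 2 n 1 := by
        rw [mul_apply_eq_comp, hW n, map_smul, Ws_single n, smul_smul, mul_comm]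
      rw [pow_succ, mul_apply_eq_comp, hC1, map_smul, ih n, smul_smul, ← pow_succ']
  -- the scalar identity from the hypothesis
  have hkey : ∀ n : ℤ, ((starRingEnd ℂ) (l n) * l n) ^ k
      = ∏ i ∈ Finset.range k, ((starRingEnd ℂ) (l (n + i)) * l (n + i)) := by
    intro n
    have h : ((adjoint W * W) ^ k) (lp.single 2 n (1 : ℂ))
        = ((adjoint W) ^ k * W ^ k) (lp.single 2 n 1) := by rw [heq]
    simp only [mul_apply_eq_comp] at h
    rw [hCpow k n, hWpow k n, map_smul, hWspow k n, smul_smul] at h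
    have hne : (lp.single (E := fun _ : ℤ => ℂ) 2 n (1 : ℂ)) ≠ 0 := by
      intro h0
      have h1 : (lp.single (E := fun _ : ℤ => ℂ) 2 n (1 : ℂ)) n = 1 := lp.single_apply_self _ _ _
      rw [h0] at h1
      simp at h1
    have hs := smul_left_injective ℂ hne h
    rw [hs, ← Finset.prod_mul_distrib]
    refine Finset.prod_congr rfl fun i _ => ?_
    ring
  -- pass to a real sequence
  obtain ⟨a, ha⟩ : ∃ a : ℤ → ℝ, ∀ n : ℤ, a n = Complex.normSq (l n) := ⟨_, fun _ => rfl⟩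
  have apos : ∀ n : ℤ, 0 < a n := fun n => by
    rw [ha]
    exact Complex.normSq_pos.mpr (hl n)
  have hα : ∀ n : ℤ, ((a n : ℝ) : ℂ) = (starRingEnd ℂ) (l n) * l n := fun n => by
    rw [ha]
    exact Complex.normSq_eq_conj_mul_self
  have hreal : ∀ n : ℤ, a n ^ k = ∏ i ∈ Finset.range k, a (n + i) := by
    intro n
    have h2 : ((a n : ℝ) : ℂ) ^ k = ∏ i ∈ Finset.range k, ((a (n + i) : ℝ) : ℂ) := by
      rw [hα n, hkey n]
      exact Finset.prod_congr rfl fun i _ => (hα _).symm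
    exact_mod_cast h2
  have hnorm : ∀ n : ℤ, ‖l n‖ ≤ ‖W‖ := by
    intro n
    have h1 : ‖W (lp.single 2 n (1 : ℂ))‖ = ‖l n‖ := by
      rw [hW n, norm_smul]
      have h0 : ‖lp.single (E := fun _ : ℤ => ℂ) 2 (n + 1) (1 : ℂ)‖ = ‖(1 : ℂ)‖ :=
        lp.norm_single (E := fun _ : ℤ => ℂ) (p := 2) (by norm_num) (n + 1) (1 : ℂ)
      rw [h0]
      simp
    have h2 := W.le_opNorm (lp.single 2 n (1 : ℂ))
    have h3 : ‖lp.single (E := fun _ : ℤ => ℂ) 2 n (1 : ℂ)‖ = 1 := by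
      rw [lp.norm_single (E := fun _ : ℤ => ℂ) (p := 2) (by norm_num) n (1 : ℂ)]
      simp
    rw [h1, h3, mul_one] at h2
    exact h2
  have habove : ∀ n : ℤ, a n ≤ ‖W‖ ^ 2 := by
    intro n
    have h1 : a n = ‖l n‖ ^ 2 := by
      rw [ha]
      simp only [Complex.sq_norm]
    rw [h1]
    exact pow_le_pow_left₀ (norm_nonneg _) (hnorm n) 2
  obtain ⟨J, rfl⟩ : ∃ J : ℕ, k = J + 2 := ⟨k - 2, by omega⟩
  obtain ⟨t, ht⟩ : ∃ t : ℤ → ℝ, ∀ n : ℤ, t n = Real.log (a n) := ⟨_, fun _ => rfl⟩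
  have hb : ∀ n : ℤ, t n ≤ Real.log (‖W‖ ^ 2 + 1) := by
    intro n
    simp only [ht]
    exact (Real.log_le_log_iff (apos n) (by positivity)).mpr (by linarith [habove n])
  have hlog : ∀ n : ℤ, ((J + 2 : ℕ) : ℝ) * t n = ∑ i ∈ Finset.range (J + 2), t (n + i) := by
    intro n
    have h := congrArg Real.log (hreal n)
    rw [Real.log_pow, Real.log_prod (fun i _ => (apos _).ne')] at h
    simp only [ht]
    exact h
  have hrel : ∀ n : ℤ, ((J : ℝ) + 1) * t n = ∑ i ∈ Finset.range (J + 1), t (n + 1 + i) := by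
    intro n
    have h := hlog n
    rw [Finset.sum_range_succ'] at h
    have hsum : ∑ i ∈ Finset.range (J + 1), t (n + ((i + 1 : ℕ) : ℤ))
        = ∑ i ∈ Finset.range (J + 1), t (n + 1 + i) := by
      refine Finset.sum_congr rfl fun i _ => ?_
      congr 1
      push_cast
      ring
    rw [hsum] at h
    push_cast at h
    norm_num at h
    linarith
  have hconst := seq_const_of_avg J t _ hb hrel
  have haconst : ∀ n : ℤ, a (n + 1) = a n := by
    intro n
    have h := hconst n
    have e1 : a (n + 1) = Real.exp (t (n + 1)) := by
      simp only [ht]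
      exact (Real.exp_log (apos _)).symm
    have e2 : a n = Real.exp (t n) := by
      simp only [ht]
      exact (Real.exp_log (apos _)).symm
    rw [e1, e2, h]
  -- conclude quasinormality
  apply ContinuousLinearMap.ext
  intro x
  apply lp.ext
  funext m
  simp only [mul_apply_eq_comp]
  rw [W_coord, C_coord, C_coord, W_coord]
  have hca : ((a (m - 1) : ℝ) : ℂ) = ((a m : ℝ) : ℂ) := by
    have h := haconst (m - 1)
    rw [show m - 1 + 1 = m from by ring] at h
    exact_mod_cast h.symm
  rw [← hα, ← hα, hca]
  ring
end

section
/- Let k ≥ 1 be an integer and consider the polynomial p(z) = k·z^k − (z^{k−1} + z^{k−2} + · · · + z + 1) over ℂ. Then every complex root z of p with z ≠ 1 satisfies |z| < 1 (and p(1) = 0). -/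
open Polynomial

/-- Every root of `p(z) = k·z^k − (z^{k−1} + ⋯ + z + 1)` other than `z = 1`
lies in the open unit disk, and `p(1) = 0`. -/
theorem roots_of_kzk_minus_geom (k : ℕ) (hk : 1 ≤ k) (p : ℂ[X])
    (hp : p = C (k : ℂ) * X ^ k - ∑ i ∈ Finset.range k, X ^ i) :
    p.eval 1 = 0 ∧ ∀ z : ℂ, p.eval z = 0 → z ≠ 1 → ‖z‖ < 1 := by
  subst hp
  constructor
  · simp [eval_finset_sum]
  · intro z hz hz1
    simp only [eval_sub, eval_mul, eval_C, eval_pow, eval_X, eval_finset_sum, sub_eq_zero] at hz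
    by_contra hlt
    push_neg at hlt
    set r : ℝ := ‖z‖ with hr
    have hr1 : 1 ≤ r := hlt
    have hr0 : 0 < r := lt_of_lt_of_le one_pos hr1
    -- step 1: r = 1
    have habs : (k : ℝ) * r ^ k ≤ (k : ℝ) * r ^ (k - 1) := by
      have h1 : (k : ℝ) * r ^ k = ‖(k : ℂ) * z ^ k‖ := by
        simp [norm_mul, norm_pow, Complex.norm_natCast, hr]
      have h2 : ‖∑ i ∈ Finset.range k, z ^ i‖ ≤
          ∑ i ∈ Finset.range k, r ^ i := by
        refine (norm_sum_le _ _).trans_eq ?_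
        simp [norm_pow, hr]
      have h3 : ∑ i ∈ Finset.range k, r ^ i ≤ (k : ℝ) * r ^ (k - 1) := by
        calc ∑ i ∈ Finset.range k, r ^ i ≤ ∑ i ∈ Finset.range k, r ^ (k - 1) := by
              refine Finset.sum_le_sum fun i hi => ?_
              exact pow_le_pow_right₀ hr1 (Nat.le_sub_one_of_lt (Finset.mem_range.mp hi))
          _ = (k : ℝ) * r ^ (k - 1) := by
              rw [Finset.sum_const, Finset.card_range, nsmul_eq_mul]
      rw [h1, hz]
      exact h2.trans h3
    have hrk : r ^ k ≤ r ^ (k - 1) := by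
      have hk0 : (0 : ℝ) < k := by exact_mod_cast hk
      exact le_of_mul_le_mul_left habs hk0
    have hre : r ≤ 1 := by
      have : r ^ (k - 1) * r ≤ r ^ (k - 1) * 1 := by
        rw [mul_one]
        calc r ^ (k - 1) * r = r ^ k := by
              rw [← pow_succ, Nat.sub_add_cancel hk]
          _ ≤ r ^ (k - 1) := hrk
      exact le_of_mul_le_mul_left this (pow_pos hr0 _)
    have hreq : r = 1 := le_antisymm hre hr1
    -- step 2: |z| = 1, derive contradiction
    set w : ℂ := (starRingEnd ℂ) z with hw
    have hzw : z * w = 1 := by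
      rw [hw, Complex.mul_conj]
      norm_cast
      rw [Complex.normSq_eq_norm_sq, ← hr, hreq]
      norm_num
    have hwabs : ‖w‖ = 1 := by
      rw [hw, Complex.norm_conj, ← hr, hreq]
    have keq : (k : ℂ) = ∑ i ∈ Finset.range k, w ^ (k - i) := by
      have h1 : (k : ℂ) * z ^ k * w ^ k = (k : ℂ) := by
        rw [mul_assoc, ← mul_pow, hzw, one_pow, mul_one]
      rw [hz] at h1
      rw [← h1, Finset.sum_mul]
      refine Finset.sum_congr rfl fun i hi => ?_
      have hik : i ≤ k := le_of_lt (Finset.mem_range.mp hi)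
      calc z ^ i * w ^ k = z ^ i * (w ^ i * w ^ (k - i)) := by
            rw [← pow_add, Nat.add_sub_cancel' hik]
        _ = (z * w) ^ i * w ^ (k - i) := by ring
        _ = w ^ (k - i) := by rw [hzw, one_pow, one_mul]
    have kre : (k : ℝ) = ∑ i ∈ Finset.range k, (w ^ (k - i)).re := by
      have := congrArg Complex.re keq
      simpa [Complex.re_sum] using this
    have hterm : ∀ i ∈ Finset.range k, (w ^ (k - i)).re ≤ 1 := by
      intro i _
      calc (w ^ (k - i)).re ≤ ‖w ^ (k - i)‖ := Complex.re_le_norm _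
        _ = 1 := by rw [norm_pow, hwabs, one_pow]
    have hwne : w ≠ 1 := by
      intro h
      apply hz1
      have := congrArg (starRingEnd ℂ) h
      rwa [hw, Complex.conj_conj, map_one] at this
    have hwre : w.re < 1 := by
      rcases lt_or_eq_of_le (hterm (k - 1) (Finset.mem_range.mpr (Nat.sub_lt (lt_of_lt_of_le one_pos hk) one_pos))) with h | h
      · have : k - (k - 1) = 1 := by omega
        rwa [this, pow_one] at h
      · -- Re(w^(k-(k-1))) = Re w = 1, with |w| = 1 forces w = 1
        have h1 : k - (k - 1) = 1 := by omega
        rw [h1, pow_one] at h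
        exfalso
        apply hwne
        have hnsq : Complex.normSq w = 1 := by
          rw [Complex.normSq_eq_norm_sq, hwabs]; norm_num
        have him : w.im = 0 := by
          have : w.re ^ 2 + w.im ^ 2 = 1 := by
            rw [← hnsq]; simp [Complex.normSq_apply]; ring
          nlinarith
        exact Complex.ext (by rw [h]; rfl) (by rw [him]; rfl)
    have hsum : ∑ i ∈ Finset.range k, (w ^ (k - i)).re < (k : ℝ) := by
      calc ∑ i ∈ Finset.range k, (w ^ (k - i)).re
          < ∑ i ∈ Finset.range k, (1 : ℝ) := by
            refine Finset.sum_lt_sum hterm ⟨k - 1,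
              Finset.mem_range.mpr (Nat.sub_lt (lt_of_lt_of_le one_pos hk) one_pos), ?_⟩
            have h1 : k - (k - 1) = 1 := by omega
            rw [h1, pow_one]
            exact hwre
        _ = (k : ℝ) := by simp
    rw [← kre] at hsum
    exact lt_irrefl _ hsum
end

section
/- Let k ∈ ℕ (k ≥ 1) and let (a_n)_{n∈ℤ} be a bounded sequence of real numbers satisfying the recurrence k·a_n = a_{n+1} + a_{n+2} + · · · + a_{n+k} for all n ∈ ℤ. Then (a_n)_{n∈ℤ} is a constant sequence. -/
/-- Auxiliary: under the hypotheses, the sequence is weakly decreasing. -/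
lemma bounded_mean_rec_aux (k : ℕ) (hk : 1 ≤ k) (a : ℤ → ℝ) (C : ℝ)
    (hbdd : ∀ n : ℤ, |a n| ≤ C)
    (hrec : ∀ n : ℤ, (k : ℝ) * a n = ∑ i ∈ Finset.range k, a (n + (i : ℤ) + 1)) :
    ∀ n : ℤ, a (n + 1) ≤ a n := by
  set D : ℤ → ℝ := fun n => a (n + 1) - a n with hDdef
  have hC0 : 0 ≤ C := le_trans (abs_nonneg _) (hbdd 0)
  have hDb : ∀ n, D n ≤ 2 * C := by
    intro n
    have h1 := hbdd (n + 1)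
    have h2 := hbdd n
    have := abs_le.mp h1
    have := abs_le.mp h2
    simp only [hDdef]
    linarith [(abs_le.mp h1).2, (abs_le.mp h2).1]
  have hbdda : BddAbove (Set.range D) := ⟨2 * C, by rintro x ⟨n, rfl⟩; exact hDb n⟩
  have hne : (Set.range D).Nonempty := ⟨D 0, 0, rfl⟩
  set s : ℝ := sSup (Set.range D) with hs
  have hle : ∀ n, D n ≤ s := fun n => le_csSup hbdda ⟨n, rfl⟩
  -- difference sequence satisfies the same recurrence
  have hD : ∀ n : ℤ, (k : ℝ) * D n = ∑ i ∈ Finset.range k, D (n + (i : ℤ) + 1) := by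
    intro n
    have h1 := hrec n
    have h2 := hrec (n + 1)
    simp only [hDdef]
    rw [mul_sub, h1, h2, ← Finset.sum_sub_distrib]
    apply Finset.sum_congr rfl
    intro i _
    have : n + 1 + (i : ℤ) + 1 = n + (i : ℤ) + 1 + 1 := by ring
    rw [this]
  -- key step inequality: D (n+1) ≥ k * D n - (k-1) * s
  have hstep : ∀ n : ℤ, (k : ℝ) * D n - ((k : ℝ) - 1) * s ≤ D (n + 1) := by
    intro n
    obtain ⟨k', rfl⟩ : ∃ k', k = k' + 1 := ⟨k - 1, (Nat.succ_pred_eq_of_pos hk).symm⟩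
    have h := hD n
    rw [Finset.sum_range_succ'] at h
    have hrest : ∑ i ∈ Finset.range k', D (n + ((i : ℕ) + 1 : ℕ) + 1) ≤ (k' : ℝ) * s := by
      calc ∑ i ∈ Finset.range k', D (n + ((i : ℕ) + 1 : ℕ) + 1)
          ≤ ∑ _i ∈ Finset.range k', s := Finset.sum_le_sum (fun i _ => hle _)
        _ = (k' : ℝ) * s := by simp [mul_comm]
    have h0 : D (n + ((0 : ℕ) : ℤ) + 1) = D (n + 1) := by norm_num
    rw [h0] at h
    push_cast at h hrest ⊢
    linarith
  -- main claim: s ≤ 0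
  have hs0 : s ≤ 0 := by
    by_contra hpos
    push_neg at hpos
    obtain ⟨m, hm⟩ := exists_nat_gt (2 * C / (s / 2))
    have hm0 : 0 < m := by
      have : (0 : ℝ) ≤ 2 * C / (s / 2) := by positivity
      exact_mod_cast lt_of_le_of_lt this hm
    have hmC : 2 * C < (m : ℝ) * (s / 2) := by
      rw [div_lt_iff₀ (by linarith : (0 : ℝ) < s / 2)] at hm
      linarith
    set δ : ℝ := s / (2 * (k : ℝ) ^ m) with hδ
    have hkpos : (0 : ℝ) < (k : ℝ) ^ m := by positivity
    have hδpos : 0 < δ := by positivity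
    obtain ⟨x, ⟨n, rfl⟩, hx⟩ := exists_lt_of_lt_csSup hne (by linarith : s - δ < s)
    have hkm : (k : ℝ) ^ m * δ = s / 2 := by
      rw [hδ]; field_simp
    have key : ∀ j : ℕ, s - (k : ℝ) ^ j * δ < D (n + j) := by
      intro j
      induction j with
      | zero => simpa using hx
      | succ j ih =>
        have h1 := hstep (n + j)
        have hks : ((k : ℝ) - 1) * s ≤ ((k : ℝ) - 1) * s := le_refl _
        have hk1 : (1 : ℝ) ≤ (k : ℝ) := by exact_mod_cast hk
        have h2 : (k : ℝ) * (s - (k : ℝ) ^ j * δ) - ((k : ℝ) - 1) * s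
            < (k : ℝ) * D (n + j) - ((k : ℝ) - 1) * s := by
          have := mul_lt_mul_of_pos_left ih (by linarith : (0 : ℝ) < (k : ℝ))
          linarith
        have heq : n + (j : ℤ) + 1 = n + ((j + 1 : ℕ) : ℤ) := by push_cast; ring
        have h3 : (k : ℝ) * (s - (k : ℝ) ^ j * δ) - ((k : ℝ) - 1) * s
            = s - (k : ℝ) ^ (j + 1) * δ := by ring
        rw [← heq]
        linarith [hstep (n + (j : ℤ))]
    -- each D (n + j), j < m, exceeds s/2
    have hhalf : ∀ j : ℕ, j < m → s / 2 < D (n + j) := by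
      intro j hj
      have hkj : (k : ℝ) ^ j * δ ≤ (k : ℝ) ^ m * δ :=
        mul_le_mul_of_nonneg_right
          (pow_le_pow_right₀ (by exact_mod_cast hk) hj.le) hδpos.le
      have h := key j
      rw [hkm] at hkj
      clear_value s δ
      have h2 : s / 2 ≤ s - (k : ℝ) ^ j * δ := by linarith
      exact lt_of_le_of_lt h2 h
    -- telescoping sum
    have htel : ∑ j ∈ Finset.range m, D (n + j) = a (n + m) - a n := by
      have h := Finset.sum_range_sub (fun j : ℕ => a (n + j)) m
      rw [show a (n + (m : ℤ)) - a n = a (n + (m : ℤ)) - a (n + ((0 : ℕ) : ℤ)) by norm_num,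
        ← h]
      apply Finset.sum_congr rfl
      intro j _
      simp only [hDdef]
      congr 2
      push_cast; ring
    have hsum : (m : ℝ) * (s / 2) < ∑ j ∈ Finset.range m, D (n + j) := by
      have := Finset.sum_lt_sum_of_nonempty (Finset.nonempty_range_iff.mpr hm0.ne')
        (fun j hj => hhalf j (Finset.mem_range.mp hj))
      simpa [mul_comm] using this
    have hub : a (n + m) - a n ≤ 2 * C := by
      have h1 := (abs_le.mp (hbdd (n + m))).2
      have h2 := (abs_le.mp (hbdd n)).1
      linarith
    rw [htel] at hsum
    linarith
  intro n
  have := hle n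
  simp only [hDdef] at this
  linarith

/-- A bounded real sequence `(a_n)_{n ∈ ℤ}` satisfying the recurrence
`k·a_n = a_{n+1} + ⋯ + a_{n+k}` for all `n ∈ ℤ` is constant. -/
theorem bounded_mean_recurrence_constant (k : ℕ) (hk : 1 ≤ k) (a : ℤ → ℝ)
    (hbdd : ∃ C : ℝ, ∀ n : ℤ, |a n| ≤ C)
    (hrec : ∀ n : ℤ, (k : ℝ) * a n = ∑ i ∈ Finset.range k, a (n + (i : ℤ) + 1)) :
    ∀ m n : ℤ, a m = a n := by
  obtain ⟨C, hC⟩ := hbdd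
  have h1 : ∀ n : ℤ, a (n + 1) ≤ a n := bounded_mean_rec_aux k hk a C hC hrec
  have h2 : ∀ n : ℤ, a n ≤ a (n + 1) := by
    have hrec' : ∀ n : ℤ, (k : ℝ) * (-a n) = ∑ i ∈ Finset.range k, -a (n + (i : ℤ) + 1) := by
      intro n
      rw [Finset.sum_neg_distrib, ← hrec n]
      ring
    have := bounded_mean_rec_aux k hk (fun n => -a n) C
      (fun n => by simpa using hC n) hrec'
    intro n
    have h := this n
    linarith
  have heq : ∀ n : ℤ, a (n + 1) = a n := fun n => le_antisymm (h1 n) (h2 n)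
  have h0 : ∀ n : ℤ, a n = a 0 := by
    intro n
    induction n using Int.induction_on with
    | zero => rfl
    | succ i ih => rw [heq i]; exact ih
    | pred i ih => rw [← ih, ← heq (-i - 1)]; norm_num
  intro m n
  rw [h0 m, h0 n]
end

section
/- Let k ≥ 2 be an integer and let (λ_n)_{n∈ℤ} be a bounded sequence of positive real numbers satisfying λ_n^k = λ_n · λ_{n+1} · · · λ_{n+k−1} (the product of the k consecutive terms starting at λ_n) for all n ∈ ℤ. Then (λ_n)_{n∈ℤ} is a constant sequence; in particular, inf_{n∈ℤ} λ_n > 0. -/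
open Finset

/-- A bounded (two-sided) sequence satisfying the averaging relation
`K * a n = ∑_{i<K} a (n+1+i)` with `K ≥ 1` is non-increasing. -/
lemma aux_noninc (K : ℕ) (hK : 1 ≤ K) (a : ℤ → ℝ) (M0 m0 : ℝ)
    (hub : ∀ n : ℤ, a n ≤ M0) (hlb : ∀ n : ℤ, m0 ≤ a n)
    (havg : ∀ n : ℤ, (K : ℝ) * a n = ∑ i ∈ Finset.range K, a (n + 1 + (i : ℤ))) :
    ∀ n : ℤ, a (n + 1) ≤ a n := by
  set b : ℤ → ℝ := fun n => a (n + 1) - a n with hb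
  have hbddA : BddAbove (Set.range b) := by
    refine ⟨M0 - m0, ?_⟩
    rintro x ⟨n, rfl⟩
    have h1 := hub (n + 1)
    have h2 := hlb n
    simp only [hb]
    linarith
  set β := ⨆ n, b n with hβ
  have hble : ∀ n, b n ≤ β := fun n => le_ciSup hbddA n
  have hbavg : ∀ n : ℤ, (K : ℝ) * b n = ∑ i ∈ Finset.range K, b (n + 1 + (i : ℤ)) := by
    intro n
    have h1 := havg n
    have h2 := havg (n + 1)
    simp only [hb, mul_sub, h1, h2, ← Finset.sum_sub_distrib]
    apply Finset.sum_congr rfl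
    intro i _
    have : n + 1 + 1 + (i : ℤ) = n + 1 + (i : ℤ) + 1 := by ring
    rw [this]
  have hK1 : (1 : ℝ) ≤ (K : ℝ) := by exact_mod_cast hK
  have key : ∀ n : ℤ, (K : ℝ) * b n ≤ b (n + 1) + ((K : ℝ) - 1) * β := by
    intro n
    obtain ⟨K', rfl⟩ : ∃ K', K = K' + 1 := ⟨K - 1, (Nat.succ_pred_eq_of_pos hK).symm⟩
    rw [hbavg n, Finset.sum_range_succ']
    have hsum : ∑ i ∈ Finset.range K', b (n + 1 + (((i : ℕ) + 1 : ℕ) : ℤ)) ≤ (K' : ℝ) * β := by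
      calc ∑ i ∈ Finset.range K', b (n + 1 + (((i : ℕ) + 1 : ℕ) : ℤ))
          ≤ ∑ _i ∈ Finset.range K', β := Finset.sum_le_sum (fun i _ => hble _)
        _ = (K' : ℝ) * β := by rw [Finset.sum_const, Finset.card_range, nsmul_eq_mul]
    have hb1 : b (n + 1 + ((0 : ℕ) : ℤ)) = b (n + 1) := by norm_num
    rw [hb1]
    have hKK : ((K' + 1 : ℕ) : ℝ) - 1 = (K' : ℝ) := by push_cast; ring
    rw [hKK]
    linarith
  by_contra hcon
  push_neg at hcon
  obtain ⟨n1, hn1⟩ := hcon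
  have hβpos : 0 < β := lt_of_lt_of_le (by simp only [hb]; linarith) (hble n1)
  obtain ⟨N, hN⟩ := exists_nat_gt ((M0 - m0) / β)
  have hNβ : M0 - m0 < (N : ℝ) * β := by
    rw [div_lt_iff₀ hβpos] at hN
    linarith
  set P : ℝ := (N : ℝ) * (K : ℝ) ^ N + 1 with hP
  have hPpos : 0 < P := by positivity
  set ε : ℝ := ((N : ℝ) * β - (M0 - m0)) / P with hε
  have hεpos : 0 < ε := div_pos (by linarith) hPpos
  have hεP : ε * P = (N : ℝ) * β - (M0 - m0) := div_mul_cancel₀ _ (ne_of_gt hPpos)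
  obtain ⟨n₀, hn₀⟩ : ∃ n₀, β - ε < b n₀ := by
    have h : β - ε < ⨆ n, b n := by rw [← hβ]; linarith
    exact exists_lt_of_lt_ciSup h
  have hKcast : (0 : ℝ) ≤ (K : ℝ) := Nat.cast_nonneg K
  have ind : ∀ i : ℕ, β - (K : ℝ) ^ i * ε ≤ b (n₀ + (i : ℤ)) := by
    intro i
    induction i with
    | zero => simpa using hn₀.le
    | succ i ih =>
      have hkey := key (n₀ + (i : ℤ))
      have hmul : (K : ℝ) * (β - (K : ℝ) ^ i * ε) ≤ (K : ℝ) * b (n₀ + (i : ℤ)) :=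
        mul_le_mul_of_nonneg_left ih hKcast
      have harg : n₀ + (((i : ℕ) + 1 : ℕ) : ℤ) = n₀ + (i : ℤ) + 1 := by push_cast; ring
      rw [harg]
      have hpow : (K : ℝ) ^ (i + 1) = (K : ℝ) * (K : ℝ) ^ i := by ring
      nlinarith [le_trans hmul hkey]
  have telescope : ∀ M : ℕ, a (n₀ + (M : ℤ)) - a n₀ = ∑ i ∈ Finset.range M, b (n₀ + (i : ℤ)) := by
    intro M
    induction M with
    | zero => simp
    | succ M ih =>
      rw [Finset.sum_range_succ, ← ih]
      have harg : n₀ + (((M : ℕ) + 1 : ℕ) : ℤ) = n₀ + (M : ℤ) + 1 := by push_cast; ring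
      rw [harg]
      simp only [hb]
      ring
  have hsumlb : (N : ℝ) * β - (N : ℝ) * (K : ℝ) ^ N * ε ≤ ∑ i ∈ Finset.range N, b (n₀ + (i : ℤ)) := by
    have h1 : ∑ i ∈ Finset.range N, (β - (K : ℝ) ^ N * ε) ≤ ∑ i ∈ Finset.range N, b (n₀ + (i : ℤ)) := by
      apply Finset.sum_le_sum
      intro i hi
      have hpowle : (K : ℝ) ^ i ≤ (K : ℝ) ^ N :=
        pow_le_pow_right₀ hK1 (le_of_lt (Finset.mem_range.mp hi))
      have := ind i
      nlinarith
    calc (N : ℝ) * β - (N : ℝ) * (K : ℝ) ^ N * ε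
        = ∑ _i ∈ Finset.range N, (β - (K : ℝ) ^ N * ε) := by
          rw [Finset.sum_const, Finset.card_range, nsmul_eq_mul]; ring
      _ ≤ _ := h1
  have hfinal : a (n₀ + (N : ℤ)) - a n₀ ≤ M0 - m0 := by
    have := hub (n₀ + (N : ℤ)); have := hlb n₀; linarith
  rw [telescope N] at hfinal
  nlinarith [hsumlb, hεP, hfinal]

/-- A bounded sequence `(λ_n)_{n∈ℤ}` of positive reals satisfying
`λ_n^k = λ_n · λ_{n+1} ⋯ λ_{n+k−1}` for all `n` is constant; in particular it
is bounded below away from zero. -/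
theorem bounded_geometric_mean_recurrence_constant (k : ℕ) (hk : 2 ≤ k)
    (l : ℤ → ℝ) (hpos : ∀ n : ℤ, 0 < l n)
    (hbdd : ∃ C : ℝ, ∀ n : ℤ, l n ≤ C)
    (hrec : ∀ n : ℤ, l n ^ k = ∏ i ∈ Finset.range k, l (n + (i : ℤ))) :
    (∀ m n : ℤ, l m = l n) ∧ ∃ c : ℝ, 0 < c ∧ ∀ n : ℤ, c ≤ l n := by
  obtain ⟨C, hC⟩ := hbdd
  set a : ℤ → ℝ := fun n => Real.log (l n) with ha
  set M0 : ℝ := Real.log C with hM0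
  have hub : ∀ n : ℤ, a n ≤ M0 := fun n =>
    Real.log_le_log (hpos n) (hC n)
  obtain ⟨K, hKk⟩ : ∃ K : ℕ, K + 1 = k := ⟨k - 1, by omega⟩
  have hK : 1 ≤ K := by omega
  -- logarithmic form of the recurrence
  have hlog : ∀ n : ℤ, (k : ℝ) * a n = ∑ i ∈ Finset.range k, a (n + (i : ℤ)) := by
    intro n
    have h1 : Real.log (l n ^ k) = (k : ℝ) * Real.log (l n) := by
      rw [Real.log_pow]
    have h2 : Real.log (∏ i ∈ Finset.range k, l (n + (i : ℤ)))
        = ∑ i ∈ Finset.range k, Real.log (l (n + (i : ℤ))) :=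
      Real.log_prod (fun i _ => (hpos _).ne')
    rw [ha]
    rw [← h1, hrec n, h2]
  -- averaging relation
  have havg : ∀ n : ℤ, (K : ℝ) * a n = ∑ i ∈ Finset.range K, a (n + 1 + (i : ℤ)) := by
    intro n
    have h := hlog n
    rw [← hKk] at h
    rw [Finset.sum_range_succ'] at h
    have hre : ∑ i ∈ Finset.range K, a (n + (((i : ℕ) + 1 : ℕ) : ℤ))
        = ∑ i ∈ Finset.range K, a (n + 1 + (i : ℤ)) := by
      apply Finset.sum_congr rfl
      intro i _
      congr 1
      push_cast
      ring
    rw [hre] at h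
    have h0 : a (n + ((0 : ℕ) : ℤ)) = a n := by norm_num
    rw [h0] at h
    have hcast : ((K + 1 : ℕ) : ℝ) = (K : ℝ) + 1 := by push_cast; ring
    rw [hcast] at h
    linarith
  -- lower bound via conserved quantity F
  set G : ℕ → ℤ → ℝ := fun i N => ∑ j ∈ Finset.range i, a (N + (j : ℤ)) with hG
  have hGstep : ∀ (i : ℕ) (N : ℤ), G i (N + 1) = G i N + a (N + (i : ℤ)) - a N := by
    intro i N
    have h1 : G (i + 1) N = G i N + a (N + (i : ℤ)) := by
      simp only [hG]; exact Finset.sum_range_succ _ _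
    have h2 : G (i + 1) N = G i (N + 1) + a N := by
      simp only [hG]
      rw [Finset.sum_range_succ']
      have hre : ∑ j ∈ Finset.range i, a (N + (((j : ℕ) + 1 : ℕ) : ℤ))
          = ∑ j ∈ Finset.range i, a (N + 1 + (j : ℤ)) := by
        apply Finset.sum_congr rfl
        intro j _
        congr 1
        push_cast
        ring
      rw [hre]
      norm_num
    linarith
  set F : ℤ → ℝ := fun N => ∑ i ∈ Finset.range K, G (i + 1) N with hF
  have hFstep : ∀ N : ℤ, F (N + 1) = F N := by
    intro N
    rw [hF]
    simp only [hGstep]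
    rw [Finset.sum_sub_distrib, Finset.sum_add_distrib]
    have hre : ∑ i ∈ Finset.range K, a (N + (((i : ℕ) + 1 : ℕ) : ℤ))
        = ∑ i ∈ Finset.range K, a (N + 1 + (i : ℤ)) := by
      apply Finset.sum_congr rfl
      intro i _
      congr 1
      push_cast
      ring
    have h2 : ∑ i ∈ Finset.range K, a (N + 1 + (i : ℤ)) = (K : ℝ) * a N := (havg N).symm
    have h3 : ∑ _i ∈ Finset.range K, a N = (K : ℝ) * a N := by
      rw [Finset.sum_const, Finset.card_range, nsmul_eq_mul]
    rw [hre, h2, h3]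
    ring
  have hFconst : ∀ N : ℤ, F N = F 0 := by
    intro N
    induction N using Int.induction_on with
    | zero => rfl
    | succ n ih => rw [hFstep n, ih]
    | pred n ih => rw [← ih, ← hFstep (-(n : ℤ) - 1)]; norm_num
  -- bound F below in terms of a N
  have hFub : ∀ N : ℤ, F 0 ≤ (K : ℝ) * a N + (∑ i ∈ Finset.range K, (i : ℝ)) * M0 := by
    intro N
    rw [← hFconst N, hF]
    have hGle : ∀ i : ℕ, G (i + 1) N ≤ a N + (i : ℝ) * M0 := by
      intro i
      simp only [hG]
      rw [Finset.sum_range_succ']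
      have h0 : a (N + ((0 : ℕ) : ℤ)) = a N := by norm_num
      rw [h0]
      have : ∑ j ∈ Finset.range i, a (N + (((j : ℕ) + 1 : ℕ) : ℤ)) ≤ (i : ℝ) * M0 := by
        calc ∑ j ∈ Finset.range i, a (N + (((j : ℕ) + 1 : ℕ) : ℤ))
            ≤ ∑ _j ∈ Finset.range i, M0 := Finset.sum_le_sum (fun j _ => hub _)
          _ = (i : ℝ) * M0 := by rw [Finset.sum_const, Finset.card_range, nsmul_eq_mul]
      linarith
    calc ∑ i ∈ Finset.range K, G (i + 1) N
        ≤ ∑ i ∈ Finset.range K, (a N + (i : ℝ) * M0) := Finset.sum_le_sum (fun i _ => hGle i)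
      _ = (K : ℝ) * a N + (∑ i ∈ Finset.range K, (i : ℝ)) * M0 := by
          rw [Finset.sum_add_distrib, Finset.sum_const, Finset.card_range, nsmul_eq_mul,
            ← Finset.sum_mul]
  set T : ℝ := ∑ i ∈ Finset.range K, (i : ℝ) with hT
  have hKpos : (0 : ℝ) < (K : ℝ) := by exact_mod_cast hK
  set m0 : ℝ := (F 0 - T * M0) / K with hm0
  have hlb : ∀ n : ℤ, m0 ≤ a n := by
    intro n
    have h := hFub n
    rw [hm0, div_le_iff₀ hKpos]
    linarith
  -- apply the monotonicity lemma in both directions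
  have hdec : ∀ n : ℤ, a (n + 1) ≤ a n := aux_noninc K hK a M0 m0 hub hlb havg
  have hinc : ∀ n : ℤ, a n ≤ a (n + 1) := by
    have havg' : ∀ n : ℤ, (K : ℝ) * (-a n) = ∑ i ∈ Finset.range K, (-a (n + 1 + (i : ℤ))) := by
      intro n
      rw [Finset.sum_neg_distrib, ← havg n]
      ring
    have := aux_noninc K hK (fun n => -a n) (-m0) (-M0)
      (fun n => by simpa using neg_le_neg (hlb n))
      (fun n => by simpa using neg_le_neg (hub n)) havg'
    intro n
    have h := this n
    linarith
  have heq : ∀ n : ℤ, a (n + 1) = a n := fun n => le_antisymm (hdec n) (hinc n)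
  have haconst : ∀ n : ℤ, a n = a 0 := by
    intro n
    induction n using Int.induction_on with
    | zero => rfl
    | succ n ih => rw [heq n, ih]
    | pred n ih => rw [← ih, ← heq (-(n : ℤ) - 1)]; norm_num
  have hlconst : ∀ m n : ℤ, l m = l n := by
    intro m n
    have h1 : l m = Real.exp (a m) := (Real.exp_log (hpos m)).symm
    have h2 : l n = Real.exp (a n) := (Real.exp_log (hpos n)).symm
    rw [h1, h2, haconst m, haconst n]
  exact ⟨hlconst, l 0, hpos 0, fun n => le_of_eq (hlconst 0 n)⟩
end

section
/- Let n ≥ 2 be an integer. Then there exist a rational number q with 0 < q < 1 and a rational number c > 0 such that (S_{n−1}(q))^n = c · S_0(q) and, for every k ∈ {1, 2, …, n−2}, the real number c^{k/(n−1)} is irrational; equivalently, there is no rational number s with s^{n−1} = c^k. (When n = 2 the last condition is vacuous.) -/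
open Finset

def aa : ℕ → ℕ
  | k => 2 + ∑ i ∈ (Finset.range k).attach, k.choose i * aa i
termination_by k => k
decreasing_by exact Finset.mem_range.mp i.2

lemma aa_eq (k : ℕ) : aa k = 2 + ∑ i ∈ Finset.range k, k.choose i * aa i := by
  rw [aa, Finset.sum_attach (Finset.range k) (fun i => k.choose i * aa i)]

lemma aa_summable (k : ℕ) :
    Summable (fun j : ℕ => ((j : ℝ) + 1) ^ k * (1/2 : ℝ) ^ j) := by
  have h0 : Summable (fun j : ℕ => (j : ℝ) ^ k * (1/2 : ℝ) ^ j) :=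
    summable_pow_mul_geometric_of_norm_lt_one k (by norm_num)
  have h1 : Summable (fun j : ℕ => ((j + 1 : ℕ) : ℝ) ^ k * (1/2 : ℝ) ^ (j + 1)) :=
    (summable_nat_add_iff 1).2 h0
  have h2 := h1.mul_left 2
  refine h2.congr fun j => ?_
  push_cast
  ring

lemma aa_key (k : ℕ) :
    (∑' j : ℕ, ((j : ℝ) + 1) ^ k * (1/2 : ℝ) ^ j)
      = 2 + ∑ i ∈ Finset.range k,
          (k.choose i : ℝ) * ∑' j : ℕ, ((j : ℝ) + 1) ^ i * (1/2 : ℝ) ^ j := by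
  have h1 : (∑' j : ℕ, ((j : ℝ) + 1) ^ k * (1/2 : ℝ) ^ j)
      = 1 + ∑' j : ℕ, (((j : ℝ) + 1) + 1) ^ k * (1/2 : ℝ) ^ (j + 1) := by
    rw [Summable.tsum_eq_zero_add (aa_summable k)]
    push_cast
    norm_num
  have h2 : ∀ j : ℕ, (((j : ℝ) + 1) + 1) ^ k * (1/2 : ℝ) ^ (j + 1)
      = ∑ i ∈ Finset.range (k + 1),
          (k.choose i : ℝ) * (((j : ℝ) + 1) ^ i * (1/2 : ℝ) ^ (j + 1)) := by
    intro j
    rw [add_pow, Finset.sum_mul]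
    refine Finset.sum_congr rfl fun i _ => ?_
    ring
  have hsum : ∀ i : ℕ, Summable
      (fun j : ℕ => (k.choose i : ℝ) * (((j : ℝ) + 1) ^ i * (1/2 : ℝ) ^ (j + 1))) := by
    intro i
    have := ((aa_summable i).mul_right (1/2 : ℝ)).mul_left (k.choose i : ℝ)
    refine this.congr fun j => ?_
    ring
  have h3 : (∑' j : ℕ, (((j : ℝ) + 1) + 1) ^ k * (1/2 : ℝ) ^ (j + 1))
      = ∑ i ∈ Finset.range (k + 1), (k.choose i : ℝ) *
          ((1/2 : ℝ) * ∑' j : ℕ, ((j : ℝ) + 1) ^ i * (1/2 : ℝ) ^ j) := by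
    calc (∑' j : ℕ, (((j : ℝ) + 1) + 1) ^ k * (1/2 : ℝ) ^ (j + 1))
        = ∑' j : ℕ, ∑ i ∈ Finset.range (k + 1),
            (k.choose i : ℝ) * (((j : ℝ) + 1) ^ i * (1/2 : ℝ) ^ (j + 1)) :=
          tsum_congr h2
      _ = ∑ i ∈ Finset.range (k + 1), ∑' j : ℕ,
            (k.choose i : ℝ) * (((j : ℝ) + 1) ^ i * (1/2 : ℝ) ^ (j + 1)) :=
          Summable.tsum_finsetSum fun i _ => hsum i
      _ = _ := by
          refine Finset.sum_congr rfl fun i _ => ?_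
          rw [← tsum_mul_left, ← tsum_mul_left]
          refine tsum_congr fun j => ?_
          ring
  rw [h3, Finset.sum_range_succ, Nat.choose_self] at h1
  have hm : ∑ i ∈ Finset.range k, (k.choose i : ℝ) *
        ((1/2 : ℝ) * ∑' j : ℕ, ((j : ℝ) + 1) ^ i * (1/2 : ℝ) ^ j)
      = (1/2 : ℝ) * ∑ i ∈ Finset.range k, (k.choose i : ℝ) *
        ∑' j : ℕ, ((j : ℝ) + 1) ^ i * (1/2 : ℝ) ^ j := by
    rw [Finset.mul_sum]
    exact Finset.sum_congr rfl fun i _ => by ring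
  rw [hm] at h1
  push_cast at h1
  linarith [h1]

lemma aa_tsum (k : ℕ) :
    (∑' j : ℕ, ((j : ℝ) + 1) ^ k * (1/2 : ℝ) ^ j) = (aa k : ℝ) := by
  induction k using Nat.strong_induction_on with
  | _ k ih =>
    rw [aa_key k, aa_eq k]
    push_cast
    congr 1
    refine Finset.sum_congr rfl fun i hi => ?_
    rw [ih i (Finset.mem_range.mp hi)]

lemma aa_mod (k : ℕ) (hk : 1 ≤ k) : aa k % 8 = 4 := by
  induction k using Nat.strong_induction_on with
  | _ k ih =>
    obtain ⟨m, rfl⟩ : ∃ m, k = m + 1 := ⟨k - 1, by omega⟩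
    have hcast : ((aa (m + 1) : ZMod 8)) = 4 := by
      have S : ∑ i ∈ Finset.range m, (m + 1).choose (i + 1) = 2 ^ (m + 1) - 2 := by
        have h := Nat.sum_range_choose (m + 1)
        rw [Finset.sum_range_succ', Finset.sum_range_succ] at h
        simp at h
        omega
      have hS2 : 2 ∣ ∑ i ∈ Finset.range m, (m + 1).choose (i + 1) := by
        rw [S]
        have h1 : (2 : ℕ) ∣ 2 ^ (m + 1) := dvd_pow_self 2 (by omega)
        have h2 : 2 ≤ 2 ^ (m + 1) := Nat.one_lt_two_pow (by omega)
        omega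
      rw [aa_eq (m + 1)]
      push_cast
      rw [Finset.sum_range_succ']
      have h0 : ((aa 0 : ZMod 8)) = 2 := by rw [aa_eq]; simp
      have hterm : ∀ i ∈ Finset.range m,
          (((m + 1).choose (i + 1) : ZMod 8) * (aa (i + 1) : ZMod 8))
            = 4 * ((m + 1).choose (i + 1) : ZMod 8) := by
        intro i hi
        have him := Finset.mem_range.mp hi
        have h4 : (aa (i + 1) : ZMod 8) = 4 := by
          have h := ih (i + 1) (by omega) (by omega)
          calc (aa (i + 1) : ZMod 8) = ((aa (i + 1) % 8 : ℕ) : ZMod 8) :=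
                (ZMod.natCast_mod _ 8).symm
          _ = 4 := by rw [h]; norm_num
        rw [h4]; ring
      rw [Finset.sum_congr rfl hterm, h0]
      simp only [Nat.choose_zero_right]
      rw [← Finset.mul_sum, ← Nat.cast_sum]
      obtain ⟨t, ht⟩ := hS2
      rw [ht]
      push_cast
      have h8 : (2 : ZMod 8) * 4 = 0 := by decide
      calc (2 : ZMod 8) + (4 * (2 * (t : ZMod 8)) + 1 * 2)
          = 4 + (2 * 4) * (t : ZMod 8) := by ring
        _ = 4 := by rw [h8]; ring
    have hv := ZMod.val_cast_of_lt (show aa (m + 1) % 8 < 8 by omega)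
    rw [ZMod.natCast_mod, hcast] at hv
    rw [← hv]
    decide



/-- For every `n ≥ 2` there are rationals `q ∈ (0,1)` and `c > 0` with
`(S_{n−1}(q))^n = c · S_0(q)` and such that `c^{k/(n−1)}` is irrational for
every `k ∈ {1, …, n−2}` (equivalently, no rational `s` satisfies
`s^{n−1} = c^k`). -/
theorem exists_q_c_for_shift_construction (n : ℕ) (hn : 2 ≤ n) :
    ∃ q c : ℚ, 0 < q ∧ q < 1 ∧ 0 < c ∧
      (∑' j : ℕ, ((j : ℝ) + 1) ^ (n - 1) * (q : ℝ) ^ j) ^ n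
        = (c : ℝ) * ∑' j : ℕ, (q : ℝ) ^ j ∧
      ∀ k : ℕ, 1 ≤ k → k ≤ n - 2 →
        (¬∃ s : ℚ, s ^ (n - 1) = c ^ k) ∧
        Irrational ((c : ℝ) ^ ((k : ℝ) / ((n : ℝ) - 1))) := by
  obtain ⟨m, rfl⟩ : ∃ m, n = m + 2 := ⟨n - 2, by omega⟩
  obtain ⟨t, ht⟩ : ∃ t, aa (m + 1) = 8 * t + 4 := by
    have := aa_mod (m + 1) (by omega)
    exact ⟨aa (m + 1) / 8, by omega⟩
  set N : ℕ := 2 * t + 1 with hN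
  have hA : aa (m + 1) = 4 * N := by omega
  have hN0 : N ≠ 0 := by omega
  have hN2 : ¬ (2 ∣ N) := by omega
  set M : ℕ := 2 ^ (2 * m + 3) * N ^ (m + 2) with hM
  refine ⟨1/2, (M : ℚ), by norm_num, by norm_num, by positivity, ?_, ?_⟩
  · -- the tsum equation
    have hq : (((1:ℚ)/2 : ℚ) : ℝ) = 1/2 := by norm_num
    rw [hq]
    have h1 : (∑' j : ℕ, ((j : ℝ) + 1) ^ (m + 2 - 1) * (1/2 : ℝ) ^ j)
        = (aa (m + 1) : ℝ) := aa_tsum (m + 1)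
    rw [h1]
    rw [tsum_geometric_of_lt_one (by norm_num) (by norm_num : (1:ℝ)/2 < 1)]
    rw [hA, hM]
    push_cast
    rw [show ((4:ℝ)) = 2 ^ 2 by norm_num, mul_pow, ← pow_mul,
      show 2 * (m + 2) = (2 * m + 3) + 1 by ring, pow_succ]
    norm_num
    ring
  · intro k hk1 hk2
    have hk2' : k ≤ m := by omega
    have hM0 : M ≠ 0 := by positivity
    have hMQ : ((M : ℚ)) ≠ 0 := by exact_mod_cast hM0
    have hpv : padicValNat 2 M = 2 * m + 3 := by
      rw [hM, padicValNat.mul (pow_ne_zero _ two_ne_zero) (pow_ne_zero _ hN0),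
        padicValNat.prime_pow, padicValNat.pow N,
        padicValNat.eq_zero_of_not_dvd hN2]
      ring
    have hnoroot : ¬∃ s : ℚ, s ^ (m + 2 - 1) = (M : ℚ) ^ k := by
      rintro ⟨s, hs⟩
      have hs0 : s ≠ 0 := by
        intro h
        rw [h] at hs
        simp [pow_succ] at hs
        exact absurd hs.symm (pow_ne_zero _ hMQ)
      have h1 : padicValRat 2 (s ^ (m + 1)) = (m + 1 : ℕ) * padicValRat 2 s :=
        padicValRat.pow s
      have h2 : padicValRat 2 ((M : ℚ) ^ k) = (k : ℕ) * padicValRat 2 (M : ℚ) :=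
        padicValRat.pow (M : ℚ)
      rw [padicValRat.of_nat, hpv] at h2
      have key : ((m : ℤ) + 1) * padicValRat 2 s = (k : ℤ) * (2 * m + 3) := by
        have := hs
        rw [show m + 2 - 1 = m + 1 from rfl] at this
        rw [this] at h1
        rw [h1] at h2
        push_cast at h2 ⊢
        linarith
      have hco : IsCoprime ((m : ℤ) + 1) (2 * (m : ℤ) + 3) := ⟨-2, 1, by ring⟩
      have hdvd : ((m : ℤ) + 1) ∣ (k : ℤ) * (2 * (m : ℤ) + 3) :=
        ⟨padicValRat 2 s, by linarith [key]⟩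
      have hdk : ((m : ℤ) + 1) ∣ (k : ℤ) := hco.dvd_of_dvd_mul_right hdvd
      have := Int.le_of_dvd (by exact_mod_cast hk1) hdk
      omega
    refine ⟨hnoroot, ?_⟩
    rintro ⟨s, hsx⟩
    apply hnoroot
    refine ⟨s, ?_⟩
    have hcR : (0:ℝ) ≤ ((M : ℚ) : ℝ) := by positivity
    have e1 : (((M : ℚ) : ℝ) ^ ((k : ℝ) / (((m + 2 : ℕ) : ℝ) - 1))) ^ (m + 1)
        = ((M : ℚ) : ℝ) ^ k := by
      rw [← Real.rpow_natCast (((M : ℚ) : ℝ) ^ ((k : ℝ) / (((m + 2 : ℕ) : ℝ) - 1))) (m + 1),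
        ← Real.rpow_mul hcR]
      have : (k : ℝ) / (((m + 2 : ℕ) : ℝ) - 1) * ((m + 1 : ℕ) : ℝ) = (k : ℝ) := by
        have hne : ((m : ℝ) + 1) ≠ 0 := by positivity
        rw [show (((m + 2 : ℕ) : ℝ) - 1) = (m : ℝ) + 1 by push_cast; ring,
          show ((m + 1 : ℕ) : ℝ) = (m : ℝ) + 1 by push_cast; ring,
          div_mul_cancel₀ _ hne]
      rw [this, Real.rpow_natCast]
    rw [show m + 2 - 1 = m + 1 from rfl]
    have : ((s : ℝ)) ^ (m + 1) = ((M : ℚ) : ℝ) ^ k := by rw [hsx, e1]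
    exact_mod_cast this
end

section
/- Let n ≥ 2 be an integer, let α = (α_i)_{i≥1}, β = (β_i)_{i≥1}, γ = (γ_i)_{i≥0} be sequences of positive real numbers with ∑_{i=1}^∞ α_i² < ∞, and let A be a bounded linear operator on ℓ²(V∞) that is the weighted shift associated with (α, β, γ). Then (A*A)^n = (A*)^n A^n holds if and only if the following three conditions hold: (i) γ_{k+n−1}^n = γ_{k+n−1} · γ_{k+n−2} · · · γ_k for all k ≥ 0; (ii) γ_{n−i−1}^n = γ_{n−i−1} · γ_{n−i−2} · · · γ_0 · (∑_{k=1}^∞ α_k² β_k^{2(i−1)})^{1/2} for all i ∈ {1, 2, …, n−1}; and (iii) (∑_{k=1}^∞ α_k²)^{n/2} = (∑_{k=1}^∞ α_k² β_k^{2(n−1)})^{1/2}. -/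
open ContinuousLinearMap
open scoped InnerProductSpace ComplexConjugate

/-- The vertex set of the rootless directed tree `𝒯∞` with one branching
vertex: `Sum.inl k` encodes the vertex `−k` (for `k ≥ 0`) and `Sum.inr (i, j)`
encodes the vertex `(i+1, j+1)` (for `i, j ≥ 0`). -/
abbrev TreeVertex : Type := ℕ ⊕ ℕ × ℕ

/-- The Hilbert space `ℓ²(V∞)`. -/
abbrev TreeL2 : Type := lp (fun _ : TreeVertex => ℂ) 2

/-- The standard orthonormal basis vector `e_v` of `ℓ²(V∞)`. -/
noncomputable def treeBasis (v : TreeVertex) : TreeL2 := lp.single 2 v 1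

/-- `A` is the weighted shift on `𝒯∞` associated with the sequences of
positive weights `α = (α_{i+1})_{i≥0}`, `β = (β_{i+1})_{i≥0}`,
`γ = (γ_i)_{i≥0}`: `A e_{−(i+1)} = γ_i e_{−i}`,
`A e_0 = ∑_{i≥1} α_i e_{(i,1)}` (the sum converging in `ℓ²(V∞)`), and
`A e_{(i,j)} = β_i e_{(i,j+1)}`. -/
def IsTreeWeightedShift (α β γ : ℕ → ℝ) (A : TreeL2 →L[ℂ] TreeL2) : Prop :=
  (∀ i : ℕ, A (treeBasis (Sum.inl (i + 1))) = (γ i : ℂ) • treeBasis (Sum.inl i)) ∧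
  HasSum (fun i : ℕ => (α i : ℂ) • treeBasis (Sum.inr (i, 0)))
    (A (treeBasis (Sum.inl 0))) ∧
  (∀ i j : ℕ, A (treeBasis (Sum.inr (i, j))) = (β i : ℂ) • treeBasis (Sum.inr (i, j + 1)))

lemma inner_treeBasis_left (v : TreeVertex) (f : TreeL2) :
    ⟪treeBasis v, f⟫_ℂ = f v := by
  simp [treeBasis, lp.inner_single_left, RCLike.inner_apply]

lemma treeBasis_apply (v w : TreeVertex) :
    (treeBasis v : ∀ _ : TreeVertex, ℂ) w = if w = v then 1 else 0 := by
  simp [treeBasis, lp.single_apply, Pi.single_apply]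

lemma inner_treeBasis_treeBasis (v w : TreeVertex) :
    ⟪treeBasis v, treeBasis w⟫_ℂ = if v = w then 1 else 0 := by
  rw [inner_treeBasis_left, treeBasis_apply]


lemma clm_ext_treeBasis {T S : TreeL2 →L[ℂ] TreeL2}
    (h : ∀ v, T (treeBasis v) = S (treeBasis v)) : T = S := by
  refine ContinuousLinearMap.ext fun f => ?_
  have hf : HasSum (fun v : TreeVertex => lp.single 2 v (f v)) f :=
    lp.hasSum_single (by norm_num) f
  have hsingle : ∀ v : TreeVertex, lp.single (E := fun _ : TreeVertex => ℂ) 2 v (f v)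
      = f v • treeBasis v := by
    intro v
    rw [treeBasis, ← lp.single_smul, smul_eq_mul, mul_one]
  have h1 : HasSum (fun v => T (lp.single 2 v (f v))) (T f) := T.hasSum hf
  have h2 : HasSum (fun v => S (lp.single 2 v (f v))) (S f) := S.hasSum hf
  refine h1.unique ?_
  convert h2 using 2 with v
  rw [hsingle, map_smul, map_smul, h]

lemma vec_ext {x y : TreeL2} (h : ∀ v, ⟪treeBasis v, x⟫_ℂ = ⟪treeBasis v, y⟫_ℂ) : x = y := by
  apply lp.ext
  funext v
  have := h v
  rwa [inner_treeBasis_left, inner_treeBasis_left] at this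

-- coordinate of a "row vector"
lemma coord_row_same {c : ℕ → ℂ} {r : ℕ} {x : TreeL2}
    (hx : HasSum (fun i => c i • treeBasis (Sum.inr (i, r))) x) (i : ℕ) :
    ⟪treeBasis (Sum.inr (i, r)), x⟫_ℂ = c i := by
  have h := hx.mapL (innerSL ℂ (treeBasis (Sum.inr (i, r))))
  have h' : HasSum (fun i' : ℕ => if i' = i then c i else 0)
      ((innerSL ℂ (treeBasis (Sum.inr (i, r)))) x) := by
    convert h using 2 with i'
    case e'_3 => rfl
    simp only [innerSL_apply_apply, inner_smul_right, inner_treeBasis_treeBasis]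
    by_cases hi : i' = i
    · subst hi; simp
    · simp [hi, show (Sum.inr (i,r) : TreeVertex) ≠ Sum.inr (i',r) from by simp [Ne.symm hi]]
  have h2 := (hasSum_ite_eq i (c i)).unique h'
  simpa using h2.symm

lemma coord_row_ne {c : ℕ → ℂ} {r : ℕ} {x : TreeL2}
    (hx : HasSum (fun i => c i • treeBasis (Sum.inr (i, r))) x)
    {w : TreeVertex} (hw : ∀ i, w ≠ Sum.inr (i, r)) :
    ⟪treeBasis w, x⟫_ℂ = 0 := by
  have h := hx.mapL (innerSL ℂ (treeBasis w))
  have h' : HasSum (fun _ : ℕ => (0 : ℂ)) ((innerSL ℂ (treeBasis w)) x) := by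
    convert h using 2 with i'
    case e'_3 => rfl
    simp only [innerSL_apply_apply, inner_smul_right, inner_treeBasis_treeBasis]
    simp [hw i']
  have h2 := hasSum_zero.unique h'
  simpa using h2.symm

lemma hasSum_ofReal_eq {g : ℕ → ℝ} {z : ℂ} (h : HasSum (fun i => (g i : ℂ)) z) :
    z = ((∑' i, g i : ℝ) : ℂ) ∧ HasSum g z.re := by
  have hre : HasSum g z.re := by simpa using h.mapL Complex.reCLM
  have him : HasSum (fun _ : ℕ => (0 : ℝ)) z.im := by simpa using h.mapL Complex.imCLM
  have h0 : z.im = 0 := (hasSum_zero.unique him).symm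
  refine ⟨?_, hre⟩
  rw [hre.tsum_eq]
  exact Complex.ext (by simp) (by simp [h0])


section Shift

variable {α β γ : ℕ → ℝ} {A : TreeL2 →L[ℂ] TreeL2} (hA : IsTreeWeightedShift α β γ A)

include hA

lemma pow_inr (p i j : ℕ) :
    (A ^ p) (treeBasis (Sum.inr (i, j))) = ((β i ^ p : ℝ) : ℂ) • treeBasis (Sum.inr (i, j + p)) := by
  induction p generalizing j with
  | zero => simp
  | succ p ih =>
    rw [pow_succ', ContinuousLinearMap.mul_apply, ih j, map_smul, hA.2.2 i (j + p), smul_smul,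
      show j + p + 1 = j + (p + 1) by omega, pow_succ]
    congr 1
    push_cast
    ring

lemma pow_inl_ge (p k : ℕ) :
    (A ^ p) (treeBasis (Sum.inl (k + p))) =
      ((∏ j ∈ Finset.range p, γ (k + j) : ℝ) : ℂ) • treeBasis (Sum.inl k) := by
  induction p with
  | zero => simp
  | succ p ih =>
    rw [pow_succ, ContinuousLinearMap.mul_apply, show k + (p+1) = (k + p) + 1 by omega, hA.1 (k + p),
      map_smul, ih, smul_smul, Finset.prod_range_succ]
    congr 1
    push_cast
    ring

lemma hasSum_pow_zero (p : ℕ) :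
    HasSum (fun i => ((α i * β i ^ p : ℝ) : ℂ) • treeBasis (Sum.inr (i, p)))
      ((A ^ (p + 1)) (treeBasis (Sum.inl 0))) := by
  induction p with
  | zero => simpa using hA.2.1
  | succ p ih =>
    have h := ih.mapL A
    have heq : (A ^ (p + 1 + 1)) (treeBasis (Sum.inl 0))
        = A ((A ^ (p + 1)) (treeBasis (Sum.inl 0))) := by
      rw [pow_succ', ContinuousLinearMap.mul_apply]
    rw [heq]
    convert h using 2 with i
    rw [map_smul, hA.2.2 i p, smul_smul]
    congr 1
    push_cast
    ring

lemma hasSum_pow_inl_lt (m q : ℕ) :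
    HasSum (fun i => (((∏ j ∈ Finset.range m, γ j) * α i * β i ^ q : ℝ) : ℂ) •
        treeBasis (Sum.inr (i, q)))
      ((A ^ (m + (q + 1))) (treeBasis (Sum.inl m))) := by
  have h1 : (A ^ (m + (q + 1))) (treeBasis (Sum.inl m))
      = (A ^ (q + 1)) ((A ^ m) (treeBasis (Sum.inl m))) := by
    rw [show m + (q+1) = (q+1) + m by omega, pow_add, ContinuousLinearMap.mul_apply]
  have h2 : (A ^ m) (treeBasis (Sum.inl m)) =
      ((∏ j ∈ Finset.range m, γ j : ℝ) : ℂ) • treeBasis (Sum.inl 0) := by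
    simpa using pow_inl_ge hA m 0
  rw [h1, h2, map_smul]
  have h3 := (hasSum_pow_zero hA q).const_smul ((∏ j ∈ Finset.range m, γ j : ℝ) : ℂ)
  convert h3 using 2 with i
  rw [smul_smul]
  congr 1
  push_cast
  ring

end Shift

lemma inner_smul_single_smul_single (a b : ℝ) (u v : TreeVertex) :
    ⟪(a : ℂ) • treeBasis u, (b : ℂ) • treeBasis v⟫_ℂ
      = if u = v then ((a * b : ℝ) : ℂ) else 0 := by
  rw [inner_smul_left, inner_smul_right, inner_treeBasis_treeBasis]
  by_cases h : u = v
  · simp [h, Complex.conj_ofReal]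
  · simp [h]

lemma inner_row_single_zero {c : ℕ → ℂ} {r : ℕ} {x : TreeL2}
    (hx : HasSum (fun i => c i • treeBasis (Sum.inr (i, r))) x) (b : ℂ) {u : TreeVertex}
    (hu : ∀ i, u ≠ Sum.inr (i, r)) :
    ⟪x, b • treeBasis u⟫_ℂ = 0 ∧ ⟪b • treeBasis u, x⟫_ℂ = 0 := by
  have h0 : ⟪treeBasis u, x⟫_ℂ = 0 := coord_row_ne hx hu
  constructor
  · rw [inner_smul_right, ← inner_conj_symm, h0]
    simp
  · rw [inner_smul_left, h0, mul_zero]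

lemma inner_row_row_ne {a b : ℕ → ℝ} {r r' : ℕ} {x y : TreeL2}
    (hx : HasSum (fun i => ((a i : ℝ) : ℂ) • treeBasis (Sum.inr (i, r))) x)
    (hy : HasSum (fun i => ((b i : ℝ) : ℂ) • treeBasis (Sum.inr (i, r'))) y)
    (hrr : r ≠ r') : ⟪x, y⟫_ℂ = 0 := by
  have h := hy.mapL (innerSL ℂ x)
  have h' : HasSum (fun _ : ℕ => (0 : ℂ)) ((innerSL ℂ x) y) := by
    convert h using 2 with i
    case e'_3 => rfl
    rw [innerSL_apply_apply, inner_smul_right, ← inner_conj_symm,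
      coord_row_ne hx (by
        intro i' h''
        injection h'' with h3
        exact hrr (congrArg Prod.snd h3).symm)]
    simp
  have h2 := hasSum_zero.unique h'
  simpa using h2.symm

lemma inner_row_row_eq {a b : ℕ → ℝ} {r : ℕ} {x y : TreeL2}
    (hx : HasSum (fun i => ((a i : ℝ) : ℂ) • treeBasis (Sum.inr (i, r))) x)
    (hy : HasSum (fun i => ((b i : ℝ) : ℂ) • treeBasis (Sum.inr (i, r))) y) :
    ⟪x, y⟫_ℂ = ((∑' i, a i * b i : ℝ) : ℂ) ∧ HasSum (fun i => a i * b i) (⟪x, y⟫_ℂ).re := by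
  have h := hy.mapL (innerSL ℂ x)
  have h' : HasSum (fun i : ℕ => ((a i * b i : ℝ) : ℂ)) ((innerSL ℂ x) y) := by
    convert h using 2 with i
    case e'_3 => rfl
    rw [innerSL_apply_apply, inner_smul_right, ← inner_conj_symm, coord_row_same hx i]
    rw [Complex.conj_ofReal]
    push_cast
    ring
  have h2 := hasSum_ofReal_eq h'
  exact ⟨h2.1, h2.2⟩

noncomputable def mu (α β γ : ℕ → ℝ) (n : ℕ) : TreeVertex → ℝ
  | Sum.inl m =>
      if n ≤ m then (∏ j ∈ Finset.range n, γ (m - n + j)) ^ 2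
      else (∏ j ∈ Finset.range m, γ j) ^ 2 * ∑' i, α i ^ 2 * β i ^ (2 * (n - m - 1))
  | Sum.inr (i, _) => β i ^ (2 * n)

section Shift2

variable {α β γ : ℕ → ℝ} {A : TreeL2 →L[ℂ] TreeL2} (hA : IsTreeWeightedShift α β γ A)

include hA

lemma inner_pow_pow (p : ℕ) (hp : 1 ≤ p) (v w : TreeVertex) :
    ⟪(A ^ p) (treeBasis v), (A ^ p) (treeBasis w)⟫_ℂ
      = if v = w then ((mu α β γ p v : ℝ) : ℂ) else 0 := by
  rcases v with m | ⟨i, j⟩ <;> rcases w with m' | ⟨i', j'⟩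
  · -- inl, inl
    by_cases h1 : p ≤ m <;> by_cases h2 : p ≤ m'
    · obtain ⟨k, rfl⟩ : ∃ k, m = k + p := ⟨m - p, by omega⟩
      obtain ⟨k', rfl⟩ : ∃ k', m' = k' + p := ⟨m' - p, by omega⟩
      rw [pow_inl_ge hA p k, pow_inl_ge hA p k', inner_smul_single_smul_single]
      by_cases hk : k = k'
      · subst hk
        rw [if_pos rfl, if_pos rfl]
        simp only [mu, if_pos h1, Nat.add_sub_cancel]
        push_cast
        ring
      · rw [if_neg (by simp [hk]), if_neg (by simp; omega)]
    · obtain ⟨k, rfl⟩ : ∃ k, m = k + p := ⟨m - p, by omega⟩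
      obtain ⟨q, hq⟩ : ∃ q, p = m' + (q + 1) := ⟨p - m' - 1, by omega⟩
      have hy := hasSum_pow_inl_lt hA m' q
      rw [← hq] at hy
      rw [pow_inl_ge hA p k,
        (inner_row_single_zero hy _ (fun i h => by simp at h)).2,
        if_neg (by simp; omega)]
    · obtain ⟨k', rfl⟩ : ∃ k', m' = k' + p := ⟨m' - p, by omega⟩
      obtain ⟨q, hq⟩ : ∃ q, p = m + (q + 1) := ⟨p - m - 1, by omega⟩
      have hx := hasSum_pow_inl_lt hA m q
      rw [← hq] at hx
      rw [pow_inl_ge hA p k',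
        (inner_row_single_zero hx _ (fun i h => by simp at h)).1,
        if_neg (by simp; omega)]
    · obtain ⟨q, hq⟩ : ∃ q, p = m + (q + 1) := ⟨p - m - 1, by omega⟩
      obtain ⟨q', hq'⟩ : ∃ q', p = m' + (q' + 1) := ⟨p - m' - 1, by omega⟩
      have hx := hasSum_pow_inl_lt hA m q
      rw [← hq] at hx
      have hy := hasSum_pow_inl_lt hA m' q'
      rw [← hq'] at hy
      by_cases hm : m = m'
      · subst hm
        have hqq : q' = q := by omega
        rw [hqq] at hy
        rw [if_pos rfl, (inner_row_row_eq hx hy).1]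
        simp only [mu, if_neg (by omega : ¬ p ≤ m)]
        have harr : (fun i => ((∏ j ∈ Finset.range m, γ j) * α i * β i ^ q) *
            ((∏ j ∈ Finset.range m, γ j) * α i * β i ^ q)) =
            fun i => ((∏ j ∈ Finset.range m, γ j) ^ 2) *
              (α i ^ 2 * β i ^ (2 * (p - m - 1))) := by
          funext i
          rw [show 2 * (p - m - 1) = q + q by omega, pow_add]
          ring
        rw [harr, tsum_mul_left]
      · rw [if_neg (by simp [hm]),
          inner_row_row_ne hx hy (by omega)]
  · -- inl, inr
    by_cases h1 : p ≤ m
    · obtain ⟨k, rfl⟩ : ∃ k, m = k + p := ⟨m - p, by omega⟩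
      rw [pow_inl_ge hA p k, pow_inr hA p i' j', inner_smul_single_smul_single,
        if_neg (by simp), if_neg (by simp)]
    · obtain ⟨q, hq⟩ : ∃ q, p = m + (q + 1) := ⟨p - m - 1, by omega⟩
      have hx := hasSum_pow_inl_lt hA m q
      rw [← hq] at hx
      rw [pow_inr hA p i' j',
        (inner_row_single_zero hx _ (fun i h => by simp at h; omega)).1,
        if_neg (by simp)]
  · -- inr, inl
    by_cases h1 : p ≤ m'
    · obtain ⟨k, rfl⟩ : ∃ k, m' = k + p := ⟨m' - p, by omega⟩
      rw [pow_inl_ge hA p k, pow_inr hA p i j, inner_smul_single_smul_single,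
        if_neg (by simp), if_neg (by simp)]
    · obtain ⟨q, hq⟩ : ∃ q, p = m' + (q + 1) := ⟨p - m' - 1, by omega⟩
      have hy := hasSum_pow_inl_lt hA m' q
      rw [← hq] at hy
      rw [pow_inr hA p i j,
        (inner_row_single_zero hy _ (fun i h => by simp at h; omega)).2,
        if_neg (by simp)]
  · -- inr, inr
    rw [pow_inr hA p i j, pow_inr hA p i' j', inner_smul_single_smul_single]
    by_cases h : i = i' ∧ j = j'
    · obtain ⟨rfl, rfl⟩ := h
      rw [if_pos rfl, if_pos rfl]
      simp only [mu]
      norm_cast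
      rw [show 2 * p = p + p by omega, pow_add]
    · rw [if_neg (by
          intro hc
          simp only [Sum.inr.injEq, Prod.mk.injEq] at hc
          exact h ⟨hc.1, by omega⟩),
        if_neg (by
          intro hc
          simp only [Sum.inr.injEq, Prod.mk.injEq] at hc
          exact h ⟨hc.1, hc.2⟩)]

end Shift2

section Shift3

variable {α β γ : ℕ → ℝ} {A : TreeL2 →L[ℂ] TreeL2} (hA : IsTreeWeightedShift α β γ A)

include hA

lemma AstarA_apply (v : TreeVertex) :
    (adjoint A * A) (treeBasis v) = ((mu α β γ 1 v : ℝ) : ℂ) • treeBasis v := by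
  apply vec_ext
  intro w
  rw [ContinuousLinearMap.mul_apply, ContinuousLinearMap.adjoint_inner_right, inner_smul_right,
    inner_treeBasis_treeBasis]
  have h := inner_pow_pow hA 1 le_rfl w v
  rw [pow_one] at h
  rw [h]
  by_cases hw : w = v
  · subst hw; simp
  · simp [hw]

lemma AstarA_pow_apply (n : ℕ) (v : TreeVertex) :
    ((adjoint A * A) ^ n) (treeBasis v) = ((mu α β γ 1 v ^ n : ℝ) : ℂ) • treeBasis v := by
  induction n with
  | zero => simp
  | succ n ih =>
    rw [pow_succ', ContinuousLinearMap.mul_apply, ih, map_smul, AstarA_apply hA v, smul_smul]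
    congr 1
    push_cast
    ring

omit hA in
lemma adjoint_pow_inner (n : ℕ) (v w : TreeVertex) :
    ⟪treeBasis w, ((adjoint A) ^ n * A ^ n) (treeBasis v)⟫_ℂ
      = ⟪(A ^ n) (treeBasis w), (A ^ n) (treeBasis v)⟫_ℂ := by
  rw [ContinuousLinearMap.mul_apply,
    show (adjoint A) ^ n = adjoint (A ^ n) from by
      rw [← star_eq_adjoint, ← star_eq_adjoint, ← star_pow],
    ContinuousLinearMap.adjoint_inner_right]

lemma key_iff (n : ℕ) (hn : 1 ≤ n) :
    (adjoint A * A) ^ n = (adjoint A) ^ n * A ^ n ↔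
      ∀ v, mu α β γ 1 v ^ n = mu α β γ n v := by
  constructor
  · intro h v
    have h1 := congrArg (fun T : TreeL2 →L[ℂ] TreeL2 => ⟪treeBasis v, T (treeBasis v)⟫_ℂ) h
    rw [AstarA_pow_apply hA n v, inner_smul_right, inner_treeBasis_treeBasis, if_pos rfl,
      mul_one, adjoint_pow_inner, inner_pow_pow hA n hn v v, if_pos rfl] at h1
    exact_mod_cast h1
  · intro h
    apply clm_ext_treeBasis
    intro v
    apply vec_ext
    intro w
    rw [adjoint_pow_inner, inner_pow_pow hA n hn w v, AstarA_pow_apply hA n v,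
      inner_smul_right, inner_treeBasis_treeBasis]
    by_cases hw : w = v
    · subst hw; simp [h w]
    · simp [hw]

end Shift3

lemma sq_cancel {x y : ℝ} (hx : 0 ≤ x) (hy : 0 ≤ y) (h : x ^ 2 = y ^ 2) : x = y := by
  nlinarith [sq_nonneg (x - y), sq_nonneg (x + y)]

lemma mu_one_inl_succ (α β γ : ℕ → ℝ) (m : ℕ) (hm : 1 ≤ m) :
    mu α β γ 1 (Sum.inl m) = γ (m - 1) ^ 2 := by
  simp [mu, hm, Finset.prod_range_one]

lemma mu_one_inl_zero (α β γ : ℕ → ℝ) :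
    mu α β γ 1 (Sum.inl 0) = ∑' i, α i ^ 2 := by
  simp [mu]

lemma cond_iff (n : ℕ) (hn : 2 ≤ n) (α β γ : ℕ → ℝ)
    (hα : ∀ i, 0 < α i) (hβ : ∀ i, 0 < β i) (hγ : ∀ i, 0 < γ i) :
    (∀ v, mu α β γ 1 v ^ n = mu α β γ n v) ↔
      ((∀ k : ℕ, γ (k + n - 1) ^ n = ∏ j ∈ Finset.range n, γ (k + j)) ∧
       (∀ i : ℕ, 1 ≤ i → i ≤ n - 1 →
          γ (n - i - 1) ^ n = (∏ j ∈ Finset.range (n - i), γ j) *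
            Real.sqrt (∑' m : ℕ, (α m) ^ 2 * (β m) ^ (2 * (i - 1)))) ∧
       Real.sqrt (∑' m : ℕ, (α m) ^ 2) ^ n
         = Real.sqrt (∑' m : ℕ, (α m) ^ 2 * (β m) ^ (2 * (n - 1)))) := by
  have hS : ∀ r : ℕ, (0 : ℝ) ≤ ∑' m : ℕ, (α m) ^ 2 * (β m) ^ r :=
    fun r => tsum_nonneg fun m => mul_nonneg (sq_nonneg _) (pow_nonneg (hβ m).le r)
  have hs0 : (0 : ℝ) ≤ ∑' m : ℕ, (α m) ^ 2 := tsum_nonneg fun m => by positivity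
  have hQ : ∀ m : ℕ, (0 : ℝ) < ∏ j ∈ Finset.range m, γ j :=
    fun m => Finset.prod_pos fun j _ => hγ j
  constructor
  · intro h
    refine ⟨fun k => ?_, fun i hi1 hi2 => ?_, ?_⟩
    · have h1 := h (Sum.inl (k + n))
      rw [mu_one_inl_succ α β γ (k + n) (by omega)] at h1
      simp only [mu, if_pos (by omega : n ≤ k + n), Nat.add_sub_cancel] at h1
      refine sq_cancel (pow_nonneg (hγ _).le n) (le_of_lt (Finset.prod_pos fun j _ => hγ (k + j))) ?_
      rw [← pow_mul, ← h1, ← pow_mul, Nat.mul_comm]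
    · have h1 := h (Sum.inl (n - i))
      rw [mu_one_inl_succ α β γ (n - i) (by omega)] at h1
      simp only [mu, if_neg (by omega : ¬ n ≤ n - i)] at h1
      rw [show n - (n - i) - 1 = i - 1 by omega] at h1
      rw [show n - i - 1 = n - i - 1 from rfl]
      refine sq_cancel (pow_nonneg (hγ _).le n)
        (mul_nonneg (hQ _).le (Real.sqrt_nonneg _)) ?_
      rw [mul_pow, Real.sq_sqrt (hS (2 * (i - 1))), ← pow_mul, ← h1, ← pow_mul, Nat.mul_comm]
    · have h1 := h (Sum.inl 0)
      rw [mu_one_inl_zero] at h1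
      simp only [mu, if_neg (by omega : ¬ n ≤ 0), Finset.range_zero, Finset.prod_empty,
        one_pow, one_mul, Nat.sub_zero] at h1
      refine sq_cancel (pow_nonneg (Real.sqrt_nonneg _) n) (Real.sqrt_nonneg _) ?_
      rw [Real.sq_sqrt (hS (2 * (n - 1))), ← pow_mul, Nat.mul_comm n 2, pow_mul,
        Real.sq_sqrt hs0, h1]
  · rintro ⟨h1, h2, h3⟩ v
    rcases v with m | ⟨i, j⟩
    · by_cases hm : n ≤ m
      · obtain ⟨k, rfl⟩ : ∃ k, m = k + n := ⟨m - n, by omega⟩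
        rw [mu_one_inl_succ α β γ (k + n) (by omega)]
        simp only [mu, if_pos hm, Nat.add_sub_cancel]
        rw [← h1 k, ← pow_mul, ← pow_mul, Nat.mul_comm]
      · rcases Nat.eq_zero_or_pos m with rfl | hm1
        · rw [mu_one_inl_zero]
          simp only [mu, if_neg hm, Finset.range_zero, Finset.prod_empty, one_pow, one_mul,
            Nat.sub_zero]
          have h4 := congrArg (fun x : ℝ => x ^ 2) h3
          rw [Real.sq_sqrt (hS (2 * (n - 1))), ← pow_mul, Nat.mul_comm n 2, pow_mul,
            Real.sq_sqrt hs0] at h4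
          exact h4
        · rw [mu_one_inl_succ α β γ m (by omega)]
          simp only [mu, if_neg hm]
          have h4 := congrArg (fun x : ℝ => x ^ 2) (h2 (n - m) (by omega) (by omega))
          rw [show n - (n - m) - 1 = m - 1 by omega, show n - (n - m) = m by omega,
            mul_pow, Real.sq_sqrt (hS (2 * (n - m - 1)))] at h4
          rw [← pow_mul, Nat.mul_comm 2 n, pow_mul, h4]
    · simp only [mu]
      rw [← pow_mul, Nat.mul_comm]


/-- For a bounded weighted shift `A` on the directed tree `𝒯∞`, the equality
`(A*A)^n = (A*)^n A^n` holds iff the three weight conditions (i)–(iii) hold. -/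
theorem treeShift_power_equality_iff (n : ℕ) (hn : 2 ≤ n) (α β γ : ℕ → ℝ)
    (hα : ∀ i, 0 < α i) (hβ : ∀ i, 0 < β i) (hγ : ∀ i, 0 < γ i)
    (hsum : Summable fun i : ℕ => (α i) ^ 2)
    (A : TreeL2 →L[ℂ] TreeL2) (hA : IsTreeWeightedShift α β γ A) :
    (adjoint A * A) ^ n = (adjoint A) ^ n * A ^ n ↔
      ((∀ k : ℕ, γ (k + n - 1) ^ n = ∏ j ∈ Finset.range n, γ (k + j)) ∧
       (∀ i : ℕ, 1 ≤ i → i ≤ n - 1 →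
          γ (n - i - 1) ^ n = (∏ j ∈ Finset.range (n - i), γ j) *
            Real.sqrt (∑' m : ℕ, (α m) ^ 2 * (β m) ^ (2 * (i - 1)))) ∧
       Real.sqrt (∑' m : ℕ, (α m) ^ 2) ^ n
         = Real.sqrt (∑' m : ℕ, (α m) ^ 2 * (β m) ^ (2 * (n - 1)))) := by
  rw [key_iff hA n (by omega), cond_iff n hn α β γ hα hβ hγ]
end

section
/- Let n ≥ 2 be an integer. Then there exists a bounded injective linear operator A on the complex Hilbert space ℓ²(ℕ, ℂ) such that (A*A)^n = (A*)^n A^n, while (A*A)^k ≠ (A*)^k A^k for every integer k ≥ 2 with k ≠ n; in particular A is not quasinormal, i.e., A ∘ (A*A) ≠ (A*A) ∘ A. -/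
open ContinuousLinearMap
open scoped ENNReal

noncomputable section NQN

namespace NQN

abbrev Hsp := lp (fun _ : ℕ => ℂ) 2

local notation "⟪" x ", " y "⟫" => @inner ℂ _ _ x y

/-- partial sums of squares over an injectively reindexed family are bounded by the norm². -/
lemma sum_sq_comp_le (f : Hsp) (g : ℕ → ℕ) (s : Finset ℕ) (hg : Set.InjOn g s) :
    ∑ i ∈ s, ‖f (g i)‖ ^ (2:ℕ) ≤ ‖f‖ ^ (2:ℕ) := by
  have h1 : ∑ j ∈ s.image g, ‖f j‖ ^ (2:ℕ) = ∑ i ∈ s, ‖f (g i)‖ ^ (2:ℕ) :=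
    Finset.sum_image (f := fun j => ‖(⇑f) j‖ ^ (2:ℕ)) (fun x hx y hy h => hg hx hy h)
  have h2 := lp.sum_rpow_le_norm_rpow (p := 2) (by norm_num) f (s.image g)
  have h4 : ((2:ℝ≥0∞)).toReal = ((2:ℕ):ℝ) := by norm_num
  rw [h4] at h2
  simp only [Real.rpow_natCast] at h2
  rw [← h1]
  exact h2

/-- Construct a bounded operator on `ℓ²(ℕ,ℂ)` from a pointwise formula. -/
def mkOp (Φ : (ℕ → ℂ) → ℕ → ℂ) (C : ℝ) (hC : 0 ≤ C)
    (hadd : ∀ f g : ℕ → ℂ, Φ (f + g) = Φ f + Φ g)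
    (hsmul : ∀ (c : ℂ) (f : ℕ → ℂ), Φ (c • f) = c • Φ f)
    (hbound : ∀ (f : Hsp) (s : Finset ℕ),
      ∑ i ∈ s, ‖Φ f i‖ ^ (2:ℕ) ≤ (C * ‖f‖) ^ (2:ℕ)) :
    Hsp →L[ℂ] Hsp := by
  have hb' : ∀ (f : Hsp) (s : Finset ℕ),
      ∑ i ∈ s, ‖Φ f i‖ ^ ((2:ℝ≥0∞).toReal) ≤ (C * ‖f‖) ^ ((2:ℝ≥0∞).toReal) := by
    intro f s
    have h4 : ((2:ℝ≥0∞)).toReal = ((2:ℕ):ℝ) := by norm_num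
    rw [h4]
    simp only [Real.rpow_natCast]
    exact hbound f s
  have hmem : ∀ f : Hsp, Memℓp (Φ f) 2 := fun f => memℓp_gen' (hb' f)
  refine LinearMap.mkContinuous
    { toFun := fun f => (⟨Φ f, hmem f⟩ : Hsp)
      map_add' := ?_
      map_smul' := ?_ } C ?_
  · intro f g
    apply lp.ext
    show Φ (⇑(f + g)) = _
    rw [lp.coeFn_add, hadd]
    rfl
  · intro c f
    apply lp.ext
    show Φ (⇑(c • f)) = _
    rw [lp.coeFn_smul, hsmul]
    rfl
  · intro f
    apply lp.norm_le_of_forall_sum_le (p := 2) (by norm_num)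
      (mul_nonneg hC (norm_nonneg f))
    exact hb' f

@[simp] lemma mkOp_apply (Φ : (ℕ → ℂ) → ℕ → ℂ) (C : ℝ) (hC : 0 ≤ C) (hadd hsmul hbound)
    (f : Hsp) (m : ℕ) : (mkOp Φ C hC hadd hsmul hbound f) m = Φ (⇑f) m := rfl


/-! ### constants and weights -/

def Sc (n : ℕ) : ℝ := ((2:ℝ)^(n-1)+1)⁻¹
def Tc (n : ℕ) : ℝ := (2:ℝ)^(n-1) * Sc n

lemma two_pow_pos' (j : ℕ) : (0:ℝ) < 2^j := by positivity

lemma Sc_pos (n : ℕ) : 0 < Sc n := by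
  have := two_pow_pos' (n-1); unfold Sc; positivity

lemma Sc_le_one (n : ℕ) : Sc n ≤ 1 := by
  have h := two_pow_pos' (n-1)
  rw [Sc, inv_le_one_iff₀]; right; linarith

lemma Tc_pos (n : ℕ) : 0 < Tc n := by
  have := two_pow_pos' (n-1); have := Sc_pos n; unfold Tc; positivity

lemma Sc_add_Tc (n : ℕ) : Sc n + Tc n = 1 := by
  have h := two_pow_pos' (n-1)
  rw [Sc, Tc, Sc]
  field_simp
  ring

lemma Tc_le_one (n : ℕ) : Tc n ≤ 1 := by
  have := Sc_pos n; have := Sc_add_Tc n; linarith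

def w (n : ℕ) (m : ℕ) : ℝ :=
  if m = 0 then 0 else if m = 1 then Real.sqrt (Sc n)
  else if m = 2 then Real.sqrt (Tc n)
  else if m % 2 = 1 then Real.sqrt 2 else Real.sqrt 2⁻¹

lemma w_nonneg (n m : ℕ) : 0 ≤ w n m := by
  unfold w; split_ifs <;> first | norm_num | exact Real.sqrt_nonneg _

lemma w_sq_le_two (n m : ℕ) : (w n m)^(2:ℕ) ≤ 2 := by
  unfold w; split_ifs
  · norm_num
  · rw [Real.sq_sqrt (Sc_pos n).le]; have := Sc_le_one n; linarith
  · rw [Real.sq_sqrt (Tc_pos n).le]; have := Tc_le_one n; linarith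
  · rw [Real.sq_sqrt (by norm_num : (0:ℝ) ≤ 2)]
  · rw [Real.sq_sqrt (by norm_num : (0:ℝ) ≤ 2⁻¹)]; norm_num

lemma w_ne_zero (n m : ℕ) (hm : m ≠ 0) : w n m ≠ 0 := by
  unfold w; split_ifs
  · exact absurd ‹m = 0› hm
  · exact Real.sqrt_ne_zero'.mpr (Sc_pos n)
  · exact Real.sqrt_ne_zero'.mpr (Tc_pos n)
  · exact Real.sqrt_ne_zero'.mpr (by norm_num)
  · exact Real.sqrt_ne_zero'.mpr (by norm_num)

/-! ### the operators -/

def ΦA (n : ℕ) : (ℕ → ℂ) → ℕ → ℂ := fun f m => (w n m : ℂ) * f (m - 2)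

def ΦB (n : ℕ) : (ℕ → ℂ) → ℕ → ℂ := fun g u =>
  if u = 0 then (w n 1 : ℂ) * g 1 + (w n 2 : ℂ) * g 2 else (w n (u+2) : ℂ) * g (u+2)

lemma norm_real_mul_sq (r : ℝ) (z : ℂ) : ‖(r:ℂ) * z‖^(2:ℕ) = r^2 * ‖z‖^2 := by
  rw [norm_mul, mul_pow, Complex.norm_real, Real.norm_eq_abs, sq_abs]

def opA (n : ℕ) : Hsp →L[ℂ] Hsp := by
  refine mkOp (ΦA n) 2 (by norm_num) (fun f g => ?_) (fun c f => ?_) (fun f s => ?_)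
  · funext m; simp [ΦA]; ring
  · funext m; simp [ΦA]; ring
  · -- the bound
    have hterm : ∀ i ∈ s, ‖ΦA n (⇑f) i‖ ^ (2:ℕ) ≤
        (if i ≠ 0 then 2 * ‖f (i-2)‖^(2:ℕ) else 0) := by
      intro i _
      by_cases hi : i = 0
      · simp [hi, ΦA, w]
      · simp only [hi, if_true, ne_eq, not_false_iff]
        rw [ΦA, norm_real_mul_sq]
        have h1 := w_sq_le_two n i
        have h2 : (0:ℝ) ≤ ‖f (i-2)‖^(2:ℕ) := by positivity
        nlinarith [sq_nonneg (w n i)]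
    calc ∑ i ∈ s, ‖ΦA n (⇑f) i‖ ^ (2:ℕ)
        ≤ ∑ i ∈ s, (if i ≠ 0 then 2 * ‖f (i-2)‖^(2:ℕ) else 0) := Finset.sum_le_sum hterm
      _ = ∑ i ∈ s.filter (· ≠ 0), 2 * ‖f (i-2)‖^(2:ℕ) := (Finset.sum_filter _ _).symm
      _ ≤ (2 * ‖f‖)^(2:ℕ) := by
          set t := s.filter (· ≠ 0) with ht
          rw [← Finset.sum_filter_add_sum_filter_not t (fun i => i % 2 = 1)]
          have hodd : ∑ i ∈ t.filter (fun i => i % 2 = 1), 2 * ‖f (i-2)‖^(2:ℕ)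
              ≤ 2 * ‖f‖^(2:ℕ) := by
            rw [← Finset.mul_sum]
            have : Set.InjOn (· - 2) (t.filter (fun i => i % 2 = 1)) := by
              intro a ha b hb hab
              simp only [Finset.coe_filter, Set.mem_setOf_eq, ht, Finset.mem_filter] at ha hb
              simp only at hab
              omega
            have h := sum_sq_comp_le f (· - 2) _ this
            have hnn : (0:ℝ) ≤ 2 := by norm_num
            exact mul_le_mul_of_nonneg_left h hnn
          have heven : ∑ i ∈ t.filter (fun i => ¬ i % 2 = 1), 2 * ‖f (i-2)‖^(2:ℕ)
              ≤ 2 * ‖f‖^(2:ℕ) := by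
            rw [← Finset.mul_sum]
            have : Set.InjOn (· - 2) (t.filter (fun i => ¬ i % 2 = 1)) := by
              intro a ha b hb hab
              simp only [Finset.coe_filter, Set.mem_setOf_eq, ht, Finset.mem_filter,
                ne_eq] at ha hb
              simp only at hab
              omega
            have h := sum_sq_comp_le f (· - 2) _ this
            have hnn : (0:ℝ) ≤ 2 := by norm_num
            exact mul_le_mul_of_nonneg_left h hnn
          have : (0:ℝ) ≤ ‖f‖ := norm_nonneg f
          nlinarith

@[simp] lemma opA_apply (n : ℕ) (f : Hsp) (m : ℕ) :
    (opA n f) m = (w n m : ℂ) * f (m - 2) := rfl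


def phi1 (u : ℕ) : ℕ := if u = 0 then 1 else u + 2
def phi2 (u : ℕ) : ℕ := if u = 0 then 2 else u + 2

lemma phi1_inj : Function.Injective phi1 := by
  intro a b h; unfold phi1 at h; split_ifs at h <;> omega

lemma phi2_inj : Function.Injective phi2 := by
  intro a b h; unfold phi2 at h; split_ifs at h <;> omega

def opB (n : ℕ) : Hsp →L[ℂ] Hsp := by
  refine mkOp (ΦB n) 2 (by norm_num) (fun f g => ?_) (fun c f => ?_) (fun g s => ?_)
  · funext u; by_cases hu : u = 0 <;> simp [ΦB, hu] <;> ring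
  · funext u; by_cases hu : u = 0 <;> simp [ΦB, hu] <;> ring
  · -- the bound
    have hterm : ∀ u ∈ s, ‖ΦB n (⇑g) u‖ ^ (2:ℕ) ≤
        2 * ‖g (phi1 u)‖^(2:ℕ) + 2 * ‖g (phi2 u)‖^(2:ℕ) := by
      intro u _
      by_cases hu : u = 0
      · subst hu
        simp only [ΦB, if_true, phi1, phi2, if_pos rfl]
        have h1 : ‖(w n 1 : ℂ) * g 1 + (w n 2 : ℂ) * g 2‖ ≤
            ‖(w n 1 : ℂ) * g 1‖ + ‖(w n 2 : ℂ) * g 2‖ := norm_add_le _ _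
        have e1 : ‖(w n 1 : ℂ) * g 1‖^(2:ℕ) = (w n 1)^2 * ‖g 1‖^2 := norm_real_mul_sq _ _
        have e2 : ‖(w n 2 : ℂ) * g 2‖^(2:ℕ) = (w n 2)^2 * ‖g 2‖^2 := norm_real_mul_sq _ _
        have hw1 := w_sq_le_two n 1
        have hw2 := w_sq_le_two n 2
        have hg1 : (0:ℝ) ≤ ‖g 1‖ := norm_nonneg _
        have hg2 : (0:ℝ) ≤ ‖g 2‖ := norm_nonneg _
        have hn0 : (0:ℝ) ≤ ‖(w n 1 : ℂ) * g 1 + (w n 2 : ℂ) * g 2‖ := norm_nonneg _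
        have ha : (0:ℝ) ≤ ‖(w n 1 : ℂ) * g 1‖ := norm_nonneg _
        have hb : (0:ℝ) ≤ ‖(w n 2 : ℂ) * g 2‖ := norm_nonneg _
        have key : ‖(w n 1 : ℂ) * g 1 + (w n 2 : ℂ) * g 2‖^(2:ℕ) ≤
            2 * ‖(w n 1 : ℂ) * g 1‖^(2:ℕ) + 2 * ‖(w n 2 : ℂ) * g 2‖^(2:ℕ) := by
          have h2 := pow_le_pow_left₀ hn0 h1 2
          nlinarith [sq_nonneg (‖(w n 1 : ℂ) * g 1‖ - ‖(w n 2 : ℂ) * g 2‖)]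
        have hw1' : (w n 1)^2 * ‖g 1‖^2 ≤ 1 * ‖g 1‖^2 := by
          have e : w n 1 = Real.sqrt (Sc n) := by norm_num [w]
          have : (w n 1)^(2:ℕ) ≤ 1 := by
            rw [e, Real.sq_sqrt (Sc_pos n).le]; exact Sc_le_one n
          nlinarith [sq_nonneg ‖g 1‖]
        have hw2' : (w n 2)^2 * ‖g 2‖^2 ≤ 1 * ‖g 2‖^2 := by
          have e : w n 2 = Real.sqrt (Tc n) := by norm_num [w]
          have : (w n 2)^(2:ℕ) ≤ 1 := by
            rw [e, Real.sq_sqrt (Tc_pos n).le]; exact Tc_le_one n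
          nlinarith [sq_nonneg ‖g 2‖]
        calc ‖(w n 1 : ℂ) * g 1 + (w n 2 : ℂ) * g 2‖^(2:ℕ)
            ≤ 2 * ‖(w n 1 : ℂ) * g 1‖^(2:ℕ) + 2 * ‖(w n 2 : ℂ) * g 2‖^(2:ℕ) := key
          _ = 2 * ((w n 1)^2 * ‖g 1‖^2) + 2 * ((w n 2)^2 * ‖g 2‖^2) := by rw [e1, e2]
          _ ≤ 2 * ‖g 1‖^(2:ℕ) + 2 * ‖g 2‖^(2:ℕ) := by nlinarith
      · simp only [ΦB, if_neg hu, phi1, phi2]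
        rw [norm_real_mul_sq]
        have h1 := w_sq_le_two n (u+2)
        have h2 : (0:ℝ) ≤ ‖g (u+2)‖^(2:ℕ) := by positivity
        nlinarith [sq_nonneg (w n (u+2))]
    calc ∑ i ∈ s, ‖ΦB n (⇑g) i‖ ^ (2:ℕ)
        ≤ ∑ i ∈ s, (2 * ‖g (phi1 i)‖^(2:ℕ) + 2 * ‖g (phi2 i)‖^(2:ℕ)) :=
          Finset.sum_le_sum hterm
      _ = 2 * (∑ i ∈ s, ‖g (phi1 i)‖^(2:ℕ)) + 2 * (∑ i ∈ s, ‖g (phi2 i)‖^(2:ℕ)) := by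
          rw [Finset.sum_add_distrib, Finset.mul_sum, Finset.mul_sum]
      _ ≤ 2 * ‖g‖^(2:ℕ) + 2 * ‖g‖^(2:ℕ) := by
          have h1 := sum_sq_comp_le g phi1 s (phi1_inj.injOn)
          have h2 := sum_sq_comp_le g phi2 s (phi2_inj.injOn)
          have : (0:ℝ) ≤ 2 := by norm_num
          nlinarith
      _ ≤ (2 * ‖g‖)^(2:ℕ) := by
          have : (0:ℝ) ≤ ‖g‖ := norm_nonneg g
          nlinarith

@[simp] lemma opB_apply (n : ℕ) (g : Hsp) (u : ℕ) :
    (opB n g) u = if u = 0 then (w n 1 : ℂ) * g 1 + (w n 2 : ℂ) * g 2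
      else (w n (u+2) : ℂ) * g (u+2) := rfl

/-! ### diagonal operators -/

def diagOp (d : ℕ → ℝ) (C : ℝ) (hC : 0 ≤ C) (hd : ∀ m, |d m| ≤ C) : Hsp →L[ℂ] Hsp := by
  refine mkOp (fun f m => (d m : ℂ) * f m) C hC (fun f g => ?_) (fun c f => ?_)
    (fun f s => ?_)
  · funext m; simp; ring
  · funext m; simp; ring
  · have hterm : ∀ i ∈ s, ‖(d i : ℂ) * f i‖ ^ (2:ℕ) ≤ C^2 * ‖f i‖^(2:ℕ) := by
      intro i _
      rw [norm_real_mul_sq]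
      have h1 := hd i
      have h2 : (0:ℝ) ≤ ‖f i‖^(2:ℕ) := by positivity
      have h3 : (d i)^2 ≤ C^2 := sq_le_sq' (by linarith [abs_le.mp h1]) (abs_le.mp h1).2
      nlinarith
    calc ∑ i ∈ s, ‖(d i : ℂ) * f i‖ ^ (2:ℕ)
        ≤ ∑ i ∈ s, C^2 * ‖f i‖^(2:ℕ) := Finset.sum_le_sum hterm
      _ = C^2 * ∑ i ∈ s, ‖f i‖^(2:ℕ) := by rw [Finset.mul_sum]
      _ ≤ C^2 * ‖f‖^(2:ℕ) := by
          have h := sum_sq_comp_le f (fun i => i) s (Function.injective_id.injOn)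
          exact mul_le_mul_of_nonneg_left h (sq_nonneg C)
      _ = (C * ‖f‖)^(2:ℕ) := by ring

@[simp] lemma diagOp_apply (d : ℕ → ℝ) (C : ℝ) (hC hd) (f : Hsp) (m : ℕ) :
    (diagOp d C hC hd f) m = (d m : ℂ) * f m := rfl


/-! ### adjoint -/

lemma opB_eq_adjoint (n : ℕ) : opB n = adjoint (opA n) := by
  rw [ContinuousLinearMap.eq_adjoint_iff]
  intro x y
  rw [lp.inner_eq_tsum, lp.inner_eq_tsum]
  simp only [RCLike.inner_apply]
  conv_lhs => enter [1, i]; rw [mul_comm]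
  conv_rhs => enter [1, i]; rw [mul_comm]
  set L : ℕ → ℂ := fun i => (starRingEnd ℂ) ((opB n x) i) * y i with hLdef
  set R : ℕ → ℂ := fun i => (starRingEnd ℂ) (x i) * (opA n y) i with hRdef
  have hL : Summable L := by
    have := lp.summable_inner (𝕜 := ℂ) (opB n x) y
    simpa [RCLike.inner_apply, hLdef, mul_comm, mul_assoc, mul_left_comm] using this
  have hR : Summable R := by
    have := lp.summable_inner (𝕜 := ℂ) x (opA n y)
    simpa [RCLike.inner_apply, hRdef, mul_comm, mul_assoc, mul_left_comm] using this
  have hR1 : Summable fun i => R (i+1) := (summable_nat_add_iff 1).mpr hR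
  have hR2 : Summable fun i => R (i+1+1) := (summable_nat_add_iff 2).mpr hR
  have hL0 : Summable fun i => L (i+1) := (summable_nat_add_iff 1).mpr hL
  rw [Summable.tsum_eq_zero_add hL, Summable.tsum_eq_zero_add hR, Summable.tsum_eq_zero_add hR1,
    Summable.tsum_eq_zero_add hR2]
  have htail : ∀ u : ℕ, L (u+1) = R (u+1+1+1) := by
    intro u
    simp only [hLdef, hRdef, opA_apply, opB_apply, if_neg (Nat.succ_ne_zero u)]
    have e1 : u + 1 + 2 = u + 1 + 1 + 1 := by omega
    have e2 : u + 1 + 1 + 1 - 2 = u + 1 := by omega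
    rw [e1, e2, map_mul, Complex.conj_ofReal]
    ring
  have htsum : ∑' u, L (u+1) = ∑' u, R (u+1+1+1) := tsum_congr htail
  rw [htsum]
  have h0 : L 0 = R 1 + R 2 := by
    simp only [hLdef, hRdef, opA_apply, opB_apply, if_pos rfl, if_true]
    rw [map_add, map_mul, map_mul, Complex.conj_ofReal, Complex.conj_ofReal]
    ring
  have hR0 : R 0 = 0 := by
    simp only [hRdef, opA_apply]
    have : w n 0 = 0 := by norm_num [w]
    rw [this]
    push_cast
    ring
  rw [h0, hR0]
  ring


/-! ### the diagonal of `B^k A^k` -/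

def ed (n k : ℕ) : ℕ → ℝ := fun m =>
  if m = 0 then Sc n * 2^(k-1) + Tc n * (2⁻¹:ℝ)^(k-1)
  else if m % 2 = 1 then 2^k else (2⁻¹:ℝ)^k

lemma ed_abs_le (n k : ℕ) : ∀ m, |ed n k m| ≤ 2^k + 1 := by
  intro m
  have hS := Sc_pos n; have hS1 := Sc_le_one n
  have hT := Tc_pos n; have hT1 := Tc_le_one n
  have h1 : (2:ℝ)^(k-1) ≤ 2^k := pow_le_pow_right₀ (by norm_num) (Nat.sub_le k 1)
  have h2 : ((2:ℝ)⁻¹)^(k-1) ≤ 1 := pow_le_one₀ (by norm_num) (by norm_num)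
  have h2' : ((2:ℝ)⁻¹)^k ≤ 1 := pow_le_one₀ (by norm_num) (by norm_num)
  have h3 : (0:ℝ) < 2^(k-1) := by positivity
  have h4 : (0:ℝ) < ((2:ℝ)⁻¹)^(k-1) := by positivity
  have h5 : (0:ℝ) < ((2:ℝ)⁻¹)^k := by positivity
  have h6 : (0:ℝ) < (2:ℝ)^k := by positivity
  unfold ed
  split_ifs
  · rw [abs_of_nonneg (by positivity)]
    nlinarith
  · rw [abs_of_nonneg (by positivity)]
    linarith
  · rw [abs_of_nonneg (by positivity)]
    linarith

def Dg (n k : ℕ) : Hsp →L[ℂ] Hsp :=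
  diagOp (ed n k) (2^k + 1) (by positivity) (ed_abs_le n k)

lemma diagOp_ext {d d' : ℕ → ℝ} {C C' : ℝ} {hC hd hC' hd'}
    (h : ∀ m, d m = d' m) : diagOp d C hC hd = diagOp d' C' hC' hd' := by
  refine ContinuousLinearMap.ext fun f => ?_
  apply lp.ext
  funext m
  show (d m : ℂ) * f m = (d' m : ℂ) * f m
  rw [h m]

lemma w_mul_self_one (n : ℕ) : (w n 1 : ℝ) * w n 1 = Sc n := by
  have e : w n 1 = Real.sqrt (Sc n) := by norm_num [w]
  rw [e]; exact Real.mul_self_sqrt (Sc_pos n).le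

lemma w_mul_self_two (n : ℕ) : (w n 2 : ℝ) * w n 2 = Tc n := by
  have e : w n 2 = Real.sqrt (Tc n) := by norm_num [w]
  rw [e]; exact Real.mul_self_sqrt (Tc_pos n).le

lemma w_mul_self_big (n m : ℕ) (hm : 3 ≤ m) :
    (w n m : ℝ) * w n m = if m % 2 = 1 then 2 else 2⁻¹ := by
  have e : w n m = if m % 2 = 1 then Real.sqrt 2 else Real.sqrt 2⁻¹ := by
    unfold w
    rw [if_neg (by omega), if_neg (by omega), if_neg (by omega)]
  rw [e]
  by_cases hp : m % 2 = 1
  · rw [if_pos hp, if_pos hp]; exact Real.mul_self_sqrt (by norm_num)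
  · rw [if_neg hp, if_neg hp]; exact Real.mul_self_sqrt (by norm_num)

lemma BA_eq (n : ℕ) : opB n * opA n = Dg n 1 := by
  refine ContinuousLinearMap.ext fun f => ?_
  apply lp.ext
  funext m
  show (opB n (opA n f)) m = (Dg n 1 f) m
  rcases Nat.eq_zero_or_pos m with hm | hm
  · subst hm
    rw [opB_apply, if_pos rfl]
    rw [opA_apply, opA_apply]
    show _ = ((ed n 1 0 : ℝ) : ℂ) * f 0
    have e0 : ed n 1 0 = Sc n + Tc n := by norm_num [ed]
    rw [e0]
    have h1 := w_mul_self_one n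
    have h2 := w_mul_self_two n
    push_cast [← h1, ← h2]
    ring
  · have hm0 : m ≠ 0 := hm.ne'
    rw [opB_apply, if_neg hm0, opA_apply]
    show _ = ((ed n 1 m : ℝ) : ℂ) * f m
    have e1 : m + 2 - 2 = m := by omega
    have e2 : ed n 1 m = if m % 2 = 1 then 2 else 2⁻¹ := by
      unfold ed
      rw [if_neg hm0]
      by_cases hp : m % 2 = 1
      · rw [if_pos hp, if_pos hp, pow_one]
      · rw [if_neg hp, if_neg hp, pow_one]
    have e3 := w_mul_self_big n (m+2) (by omega)
    have e4 : (m+2) % 2 = m % 2 := by omega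
    rw [e1, e2]
    rw [e4] at e3
    rw [← mul_assoc, ← Complex.ofReal_mul, e3]

lemma conj_step (n k : ℕ) : opB n * (Dg n k * opA n) = Dg n (k+1) := by
  refine ContinuousLinearMap.ext fun f => ?_
  apply lp.ext
  funext m
  show (opB n (Dg n k (opA n f))) m = (Dg n (k+1) f) m
  rcases Nat.eq_zero_or_pos m with hm | hm
  · subst hm
    rw [opB_apply, if_pos rfl]
    show (w n 1 : ℂ) * (((ed n k 1 : ℝ):ℂ) * (opA n f) 1)
        + (w n 2 : ℂ) * (((ed n k 2 : ℝ):ℂ) * (opA n f) 2)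
        = ((ed n (k+1) 0 : ℝ) : ℂ) * f 0
    rw [opA_apply, opA_apply]
    have v1 : ed n k 1 = 2^k := by norm_num [ed]
    have v2 : ed n k 2 = (2⁻¹:ℝ)^k := by norm_num [ed]
    have v0 : ed n (k+1) 0 = Sc n * 2^k + Tc n * (2⁻¹:ℝ)^k := by
      unfold ed
      rw [if_pos rfl]
      norm_num
    rw [v1, v2, v0]
    have h1 := w_mul_self_one n
    have h2 := w_mul_self_two n
    push_cast [← h1, ← h2]
    ring
  · have hm0 : m ≠ 0 := hm.ne'
    rw [opB_apply, if_neg hm0]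
    show (w n (m+2) : ℂ) * (((ed n k (m+2) : ℝ):ℂ) * (opA n f) (m+2))
        = ((ed n (k+1) m : ℝ) : ℂ) * f m
    rw [opA_apply]
    have e1 : m + 2 - 2 = m := by omega
    have e4 : (m+2) % 2 = m % 2 := by omega
    have v1 : ed n k (m+2) = if m % 2 = 1 then (2:ℝ)^k else (2⁻¹:ℝ)^k := by
      unfold ed
      rw [if_neg (by omega), e4]
    have v2 : ed n (k+1) m = if m % 2 = 1 then (2:ℝ)^(k+1) else (2⁻¹:ℝ)^(k+1) := by
      unfold ed
      rw [if_neg hm0]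
    have e3 := w_mul_self_big n (m+2) (by omega)
    rw [e4] at e3
    rw [e1, v1, v2]
    by_cases hp : m % 2 = 1
    · rw [if_pos hp] at e3 ⊢
      rw [if_pos hp]
      have : (w n (m+2) : ℂ) * (((2:ℝ)^k : ℝ):ℂ) * (w n (m+2) : ℂ)
          = (((2:ℝ)^(k+1) : ℝ):ℂ) := by
        push_cast
        rw [show ((w n (m+2):ℂ) * (2:ℂ)^k * (w n (m+2):ℂ))
            = ((w n (m+2):ℂ) * (w n (m+2):ℂ)) * (2:ℂ)^k by ring]
        rw [← Complex.ofReal_mul, e3]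
        push_cast
        ring
      calc (w n (m+2) : ℂ) * ((((2:ℝ)^k : ℝ):ℂ) * ((w n (m+2) : ℂ) * f m))
          = ((w n (m+2) : ℂ) * (((2:ℝ)^k : ℝ):ℂ) * (w n (m+2) : ℂ)) * f m := by ring
        _ = (((2:ℝ)^(k+1) : ℝ):ℂ) * f m := by rw [this]
    · rw [if_neg hp] at e3 ⊢
      rw [if_neg hp]
      have : (w n (m+2) : ℂ) * ((((2⁻¹:ℝ))^k : ℝ):ℂ) * (w n (m+2) : ℂ)
          = ((((2⁻¹:ℝ))^(k+1) : ℝ):ℂ) := by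
        push_cast
        rw [show ((w n (m+2):ℂ) * (2:ℂ)⁻¹^k * (w n (m+2):ℂ))
            = ((w n (m+2):ℂ) * (w n (m+2):ℂ)) * (2:ℂ)⁻¹^k by ring]
        rw [← Complex.ofReal_mul, e3]
        push_cast
        ring
      calc (w n (m+2) : ℂ) * (((((2⁻¹:ℝ))^k : ℝ):ℂ) * ((w n (m+2) : ℂ) * f m))
          = ((w n (m+2) : ℂ) * ((((2⁻¹:ℝ))^k : ℝ):ℂ) * (w n (m+2) : ℂ)) * f m := by ring
        _ = ((((2⁻¹:ℝ))^(k+1) : ℝ):ℂ) * f m := by rw [this]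

lemma BkAk_eq (n : ℕ) : ∀ k, 1 ≤ k → opB n ^ k * opA n ^ k = Dg n k := by
  intro k
  induction k with
  | zero => intro h; omega
  | succ k ih =>
      intro _
      rcases Nat.eq_zero_or_pos k with hk | hk
      · subst hk
        simpa using BA_eq n
      · have hstep : opB n ^ (k+1) * opA n ^ (k+1)
            = opB n * (Dg n k * opA n) := by
          rw [pow_succ' (opB n) k, pow_succ (opA n) k, ← ih hk]
          simp only [mul_assoc]
        rw [hstep, conj_step]


lemma diagOp_mul {d d' dd : ℕ → ℝ} {C C' CC : ℝ} {hC hd hC' hd' hCC hdd}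
    (h : ∀ m, d m * d' m = dd m) :
    diagOp d C hC hd * diagOp d' C' hC' hd' = diagOp dd CC hCC hdd := by
  refine ContinuousLinearMap.ext fun f => ?_
  apply lp.ext
  funext m
  show (d m : ℂ) * ((d' m : ℂ) * f m) = (dd m : ℂ) * f m
  rw [← mul_assoc, ← Complex.ofReal_mul, h m]

lemma ed1_pow_abs_le (n k : ℕ) : ∀ m, |(ed n 1 m)^k| ≤ 2^k + 1 := by
  intro m
  have h1 : |ed n 1 m| ≤ 2 := by
    have hS := Sc_pos n; have hS1 := Sc_le_one n
    have hT := Tc_pos n; have hT1 := Tc_le_one n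
    unfold ed
    split_ifs
    · rw [abs_of_nonneg (by positivity)]; norm_num; linarith
    · rw [abs_of_nonneg (by positivity)]; norm_num
    · rw [abs_of_nonneg (by positivity)]; norm_num
  calc |(ed n 1 m)^k| = |ed n 1 m|^k := abs_pow _ _
    _ ≤ 2^k := pow_le_pow_left₀ (abs_nonneg _) h1 k
    _ ≤ 2^k + 1 := by linarith

lemma BA_pow (n k : ℕ) : (opB n * opA n)^k
    = diagOp (fun m => (ed n 1 m)^k) (2^k+1) (by positivity) (ed1_pow_abs_le n k) := by
  induction k with
  | zero =>
      refine ContinuousLinearMap.ext fun f => ?_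
      apply lp.ext
      funext m
      show f m = ((ed n 1 m)^0 : ℝ) * f m
      norm_num
  | succ k ih =>
      rw [pow_succ, ih, BA_eq]
      exact diagOp_mul (fun m => (pow_succ (ed n 1 m) k).symm)

lemma ed_n_zero (n : ℕ) : ed n n 0 = 1 := by
  have h : (2:ℝ)^(n-1) * (2⁻¹:ℝ)^(n-1) = 1 := by
    rw [← mul_pow]; norm_num
  have h2 : Sc n * ((2:ℝ)^(n-1) + 1) = 1 := by
    rw [Sc]
    refine inv_mul_cancel₀ ?_
    positivity
  show Sc n * 2^(n-1) + Tc n * (2⁻¹:ℝ)^(n-1) = 1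
  rw [Tc]
  linear_combination h2 + Sc n * h

lemma pointwise_pow_n (n : ℕ) : ∀ m, (ed n 1 m)^n = ed n n m := by
  intro m
  rcases Nat.eq_zero_or_pos m with hm | hm
  · subst hm
    have e1 : ed n 1 0 = 1 := by
      show Sc n * 2^(1-1) + Tc n * (2⁻¹:ℝ)^(1-1) = 1
      norm_num
      linarith [Sc_add_Tc n]
    rw [e1, one_pow, ed_n_zero]
  · have hm0 : m ≠ 0 := hm.ne'
    unfold ed
    rw [if_neg hm0, if_neg hm0]
    by_cases hp : m % 2 = 1
    · rw [if_pos hp, if_pos hp, pow_one]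
    · rw [if_neg hp, if_neg hp, pow_one]

lemma arith_ne (n k : ℕ) (hn : 2 ≤ n) (hk : 2 ≤ k) (hkn : k ≠ n) :
    Sc n * 2^(k-1) + Tc n * (2⁻¹:ℝ)^(k-1) ≠ 1 := by
  intro h
  set a := k - 1 with ha
  set c := n - 1 with hc
  have hac : a ≠ c := by omega
  have ha1 : 1 ≤ a := by omega
  have hb : (2:ℝ)^a * (2⁻¹:ℝ)^a = 1 := by rw [← mul_pow]; norm_num
  have h2 : Sc n * ((2:ℝ)^c + 1) = 1 := by
    rw [Sc, ← hc]
    refine inv_mul_cancel₀ ?_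
    positivity
  have hTc : Tc n = (2:ℝ)^c * Sc n := by rw [Tc, hc]
  rw [hTc] at h
  have hScne : Sc n ≠ 0 := (Sc_pos n).ne'
  have hcan : (2:ℝ)^a + 2^c * (2⁻¹:ℝ)^a = 2^c + 1 := by
    have hh : Sc n * ((2:ℝ)^a + 2^c * (2⁻¹:ℝ)^a) = Sc n * ((2:ℝ)^c + 1) := by
      rw [h2]; linear_combination h
    exact mul_left_cancel₀ hScne hh
  have key : ((2:ℝ)^a - 1) * ((2:ℝ)^a - 2^c) = 0 := by
    linear_combination ((2:ℝ)^a) * hcan - ((2:ℝ)^c) * hb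
  have h1a : (1:ℝ) < 2^a := by
    have : (2:ℝ)^0 < 2^a := pow_lt_pow_right₀ (by norm_num) (by omega)
    simpa using this
  rcases mul_eq_zero.mp key with hz | hz
  · linarith
  · have : (2:ℝ)^a = 2^c := by linarith
    rcases Nat.lt_or_ge a c with hlt | hge
    · have := pow_lt_pow_right₀ (by norm_num : (1:ℝ) < 2) hlt
      linarith
    · have hgt : c < a := by omega
      have := pow_lt_pow_right₀ (by norm_num : (1:ℝ) < 2) hgt
      linarith

lemma opA_injective (n : ℕ) : Function.Injective (opA n) := by
  intro f g h
  rw [← sub_eq_zero]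
  have h0 : opA n (f - g) = 0 := by rw [map_sub, h, sub_self]
  have hcoord : ∀ m : ℕ, (w n m : ℂ) * (f (m-2) - g (m-2)) = 0 := by
    intro m
    have h1 := congrArg (fun z : Hsp => (z : ℕ → ℂ) m) h0
    simp only [opA_apply, lp.coeFn_sub, Pi.sub_apply, lp.coeFn_zero, Pi.zero_apply] at h1
    linear_combination h1
  rw [lp.eq_zero_iff_coeFn_eq_zero]
  funext u
  show (f - g) u = 0
  rw [lp.coeFn_sub] at *
  show f u - g u = 0
  match u with
  | 0 =>
      have h1 := hcoord 1
      have hw : (w n 1 : ℂ) ≠ 0 := Complex.ofReal_ne_zero.mpr (w_ne_zero n 1 one_ne_zero)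
      have := (mul_eq_zero.mp h1).resolve_left hw
      simpa using this
  | (v+1) =>
      have h1 := hcoord (v+3)
      have hw : (w n (v+3) : ℂ) ≠ 0 :=
        Complex.ofReal_ne_zero.mpr (w_ne_zero n (v+3) (by omega))
      have := (mul_eq_zero.mp h1).resolve_left hw
      simpa [show v + 3 - 2 = v + 1 by omega] using this

lemma single_zero_val : ((lp.single 2 0 (1:ℂ) : Hsp) : ℕ → ℂ) 0 = 1 :=
  lp.single_apply_self 2 0 1


lemma ed_one_zero (n : ℕ) : ed n 1 0 = 1 := by
  show Sc n * 2^(1-1) + Tc n * (2⁻¹:ℝ)^(1-1) = 1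
  norm_num
  linarith [Sc_add_Tc n]

lemma ed_one_one (n : ℕ) : ed n 1 1 = 2 := by norm_num [ed]

lemma ed_k_zero (n k : ℕ) : ed n k 0 = Sc n * 2^(k-1) + Tc n * (2⁻¹:ℝ)^(k-1) := by
  unfold ed; rw [if_pos rfl]

end NQN

end NQN

open NQN in
/-- For every `n ≥ 2` there is a bounded injective operator `A` on `ℓ²(ℕ, ℂ)`
with `(A*A)^n = (A*)^n A^n` but `(A*A)^k ≠ (A*)^k A^k` for every integer
`k ≥ 2` with `k ≠ n`; in particular `A` is not quasinormal. -/
theorem exists_nonquasinormal_single_power_equality (n : ℕ) (hn : 2 ≤ n) :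
    ∃ A : lp (fun _ : ℕ => ℂ) 2 →L[ℂ] lp (fun _ : ℕ => ℂ) 2,
      Function.Injective A ∧
      (adjoint A * A) ^ n = (adjoint A) ^ n * A ^ n ∧
      (∀ k : ℕ, 2 ≤ k → k ≠ n →
        (adjoint A * A) ^ k ≠ (adjoint A) ^ k * A ^ k) ∧
      A * (adjoint A * A) ≠ (adjoint A * A) * A := by
  refine ⟨opA n, opA_injective n, ?_, ?_, ?_⟩
  · rw [← opB_eq_adjoint n, BA_pow n n, BkAk_eq n n (by omega), Dg]
    exact diagOp_ext (pointwise_pow_n n)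
  · intro k hk hkn h
    rw [← opB_eq_adjoint n, BA_pow n k, BkAk_eq n k (by omega), Dg] at h
    have h0 := congrArg (fun P : Hsp →L[ℂ] Hsp =>
      ((P (lp.single 2 0 1) : Hsp) : ℕ → ℂ) 0) h
    simp only [diagOp_apply, single_zero_val, mul_one] at h0
    have h1 : (ed n 1 0)^k = ed n k 0 := by exact_mod_cast h0
    rw [ed_one_zero, one_pow, ed_k_zero] at h1
    exact arith_ne n k hn hk hkn h1.symm
  · intro h
    rw [← opB_eq_adjoint n, BA_eq n] at h
    have h0 := congrArg (fun P : Hsp →L[ℂ] Hsp =>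
      ((P (lp.single 2 0 1) : Hsp) : ℕ → ℂ) 1) h
    simp only [ContinuousLinearMap.mul_apply] at h0
    have l1 : ((opA n (Dg n 1 (lp.single 2 0 1)) : Hsp) : ℕ → ℂ) 1
        = (w n 1 : ℂ) := by
      rw [opA_apply]
      show (w n 1 : ℂ) * ((Dg n 1 (lp.single 2 0 1) : Hsp) : ℕ → ℂ) 0 = _
      rw [Dg]
      show (w n 1 : ℂ) * ((ed n 1 0 : ℝ) * ((lp.single 2 0 1 : Hsp) : ℕ → ℂ) 0) = _
      rw [single_zero_val, ed_one_zero]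
      norm_num
    have l2 : ((Dg n 1 (opA n (lp.single 2 0 1)) : Hsp) : ℕ → ℂ) 1
        = 2 * (w n 1 : ℂ) := by
      rw [Dg]
      show (ed n 1 1 : ℝ) * ((opA n (lp.single 2 0 1) : Hsp) : ℕ → ℂ) 1 = _
      rw [opA_apply, ed_one_one]
      show ((2:ℝ) : ℂ) * ((w n 1 : ℂ) * ((lp.single 2 0 1 : Hsp) : ℕ → ℂ) 0) = _
      rw [single_zero_val]
      norm_num
    rw [l1, l2] at h0
    have hw : (w n 1 : ℂ) ≠ 0 := Complex.ofReal_ne_zero.mpr (w_ne_zero n 1 one_ne_zero)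
    have : (w n 1 : ℂ) = 0 := by linear_combination -h0
    exact hw this
end
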